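/- arXiv:1801.04190 — 5 statements merged into one kernel-verified Lean document; each statement's English description precedes it below -/
import Mathlib

section
/- Let s > 0 and r₁, r₂ ∈ ℝ, put r² = r₁² + r₂² and ν = (−r² + √(r⁴ + 8 s r²))/2. Then 0 ≤ ν < 2s and ν² = r²(2s − ν). Moreover, the infimum over (x,y,c) ∈ ℝ³ with x² + y² + c² > 0 of F(x,y,c) := −(1/2) log(x² + y² + c²) + s (x² + y² + c²) − r₁ x − r₂ y equals (1/2) log(2s − ν) − r²/(2ν) + 1/2 (with the convention r²/(2ν) = 0 when r = 0), and if r > 0 this infimum is attained at (x,y,c) = (r₁/ν, r₂/ν, 0). -/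
open Real

set_option maxHeartbeats 1600000 in
/-- closed-form evaluation of the pointwise inner minimization of the
Lagrangian.  With `s > 0`, `r² = r₁² + r₂²`, `ν = (−r² + √(r⁴ + 8sr²))/2`, we have
`0 ≤ ν < 2s`, `ν² = r²(2s − ν)`, the infimum of
`F(x,y,c) = −(1/2) log(x²+y²+c²) + s(x²+y²+c²) − r₁x − r₂y` over `x²+y²+c² > 0`
equals `(1/2) log(2s−ν) − r²/(2ν) + 1/2` (in Lean `r²/(2·0) = 0`, implementing the
stated convention), and when `r > 0` it is attained at `(r₁/ν, r₂/ν, 0)`. -/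
theorem inner_min_closed_form (s r₁ r₂ rsq ν : ℝ) (hs : 0 < s)
    (hrsq : rsq = r₁ ^ 2 + r₂ ^ 2)
    (hν : ν = (-rsq + Real.sqrt (rsq ^ 2 + 8 * s * rsq)) / 2) :
    (0 ≤ ν ∧ ν < 2 * s) ∧
    ν ^ 2 = rsq * (2 * s - ν) ∧
    sInf {v | ∃ x y c : ℝ, 0 < x ^ 2 + y ^ 2 + c ^ 2 ∧
        v = -(1 / 2) * Real.log (x ^ 2 + y ^ 2 + c ^ 2)
            + s * (x ^ 2 + y ^ 2 + c ^ 2) - r₁ * x - r₂ * y}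
      = (1 / 2) * Real.log (2 * s - ν) - rsq / (2 * ν) + 1 / 2 ∧
    (0 < rsq →
      -(1 / 2) * Real.log ((r₁ / ν) ^ 2 + (r₂ / ν) ^ 2 + 0 ^ 2)
          + s * ((r₁ / ν) ^ 2 + (r₂ / ν) ^ 2 + 0 ^ 2) - r₁ * (r₁ / ν) - r₂ * (r₂ / ν)
        = (1 / 2) * Real.log (2 * s - ν) - rsq / (2 * ν) + 1 / 2) := by
  have hrsq0 : 0 ≤ rsq := by rw [hrsq]; positivity
  have hsq : Real.sqrt (rsq ^ 2 + 8 * s * rsq) ^ 2 = rsq ^ 2 + 8 * s * rsq :=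
    Real.sq_sqrt (by positivity)
  have hsge : rsq ≤ Real.sqrt (rsq ^ 2 + 8 * s * rsq) := by
    have h := Real.sqrt_le_sqrt (show rsq ^ 2 ≤ rsq ^ 2 + 8 * s * rsq by nlinarith)
    rwa [Real.sqrt_sq hrsq0] at h
  have hν0 : 0 ≤ ν := by rw [hν]; linarith
  have hνlt : ν < 2 * s := by
    have h : Real.sqrt (rsq ^ 2 + 8 * s * rsq) < rsq + 4 * s := by
      rw [show rsq + 4 * s = Real.sqrt ((rsq + 4 * s) ^ 2) from
        (Real.sqrt_sq (by linarith)).symm]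
      exact Real.sqrt_lt_sqrt (by positivity) (by nlinarith)
    rw [hν]; linarith
  have h2sν : 0 < 2 * s - ν := by linarith
  have hkey : ν ^ 2 = rsq * (2 * s - ν) := by
    have h2 : Real.sqrt (rsq ^ 2 + 8 * s * rsq) = 2 * ν + rsq := by rw [hν]; ring
    rw [h2] at hsq
    nlinarith [hsq]
  have hνpos : 0 < rsq → 0 < ν := by
    intro hr
    rcases hν0.lt_or_eq with h | h
    · exact h
    · exfalso; rw [← h] at hkey; nlinarith
  have hν00 : rsq = 0 → ν = 0 := by
    intro h
    have h1 : ν ^ 2 = 0 := by rw [h] at hkey; linarith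
    exact pow_eq_zero_iff two_ne_zero |>.mp h1
  -- value at the candidate minimizer when rsq > 0
  have hval : 0 < rsq →
      -(1 / 2) * Real.log ((r₁ / ν) ^ 2 + (r₂ / ν) ^ 2 + 0 ^ 2)
          + s * ((r₁ / ν) ^ 2 + (r₂ / ν) ^ 2 + 0 ^ 2) - r₁ * (r₁ / ν) - r₂ * (r₂ / ν)
        = (1 / 2) * Real.log (2 * s - ν) - rsq / (2 * ν) + 1 / 2 := by
    intro hr
    have hνp := hνpos hr
    have hν2 : ν ^ 2 ≠ 0 := by positivity
    have ht : (r₁ / ν) ^ 2 + (r₂ / ν) ^ 2 + 0 ^ 2 = 1 / (2 * s - ν) := by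
      field_simp
      nlinarith [hkey]
    have hkey' : ν ^ 2 = (r₁ ^ 2 + r₂ ^ 2) * (2 * s - ν) := by rw [← hrsq]; exact hkey
    have harith : s * (2 * s - ν)⁻¹ - r₁ * (r₁ / ν) - r₂ * (r₂ / ν)
        = -(rsq / (2 * ν)) + 1 / 2 := by
      rw [hrsq]
      field_simp
      have hne : s * 2 - ν ≠ 0 := by linarith
      field_simp
      nlinarith [hkey']
    rw [ht, show (1:ℝ) / (2 * s - ν) = (2 * s - ν)⁻¹ from one_div _, Real.log_inv]
    linarith [harith]
  -- lower bound
  have hlb : ∀ x y c : ℝ, 0 < x ^ 2 + y ^ 2 + c ^ 2 →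
      (1 / 2) * Real.log (2 * s - ν) - rsq / (2 * ν) + 1 / 2 ≤
      -(1 / 2) * Real.log (x ^ 2 + y ^ 2 + c ^ 2)
        + s * (x ^ 2 + y ^ 2 + c ^ 2) - r₁ * x - r₂ * y := by
    intro x y c ht
    have hcs0 : r₁ * x + r₂ * y ≤ Real.sqrt rsq * Real.sqrt (x ^ 2 + y ^ 2 + c ^ 2) := by
      have h1 : (r₁ * x + r₂ * y) ^ 2 ≤ rsq * (x ^ 2 + y ^ 2 + c ^ 2) := by
        nlinarith [sq_nonneg (r₁ * y - r₂ * x), sq_nonneg c, hrsq0,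
          sq_nonneg r₁, sq_nonneg r₂]
      calc r₁ * x + r₂ * y ≤ |r₁ * x + r₂ * y| := le_abs_self _
        _ = Real.sqrt ((r₁ * x + r₂ * y) ^ 2) := (Real.sqrt_sq_eq_abs _).symm
        _ ≤ Real.sqrt (rsq * (x ^ 2 + y ^ 2 + c ^ 2)) := Real.sqrt_le_sqrt h1
        _ = Real.sqrt rsq * Real.sqrt (x ^ 2 + y ^ 2 + c ^ 2) := Real.sqrt_mul hrsq0 _
    generalize hgen : x ^ 2 + y ^ 2 + c ^ 2 = t at ht hcs0 ⊢
    have hlog : Real.log t + Real.log (2 * s - ν) ≤ t * (2 * s - ν) - 1 := by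
      have h := Real.log_le_sub_one_of_pos (mul_pos ht h2sν)
      rwa [Real.log_mul (ne_of_gt ht) (ne_of_gt h2sν)] at h
    have hC : Real.sqrt rsq * Real.sqrt t - t * ν / 2 ≤ rsq / (2 * ν) := by
      rcases hν0.lt_or_eq with hνp | hνz
      · have h1 : Real.sqrt t ^ 2 = t := Real.sq_sqrt ht.le
        have h2 : Real.sqrt rsq ^ 2 = rsq := Real.sq_sqrt hrsq0
        have hexp : (Real.sqrt rsq * Real.sqrt t - t * ν / 2) * (2 * ν)
            = rsq - (ν * Real.sqrt t - Real.sqrt rsq) ^ 2 := by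
          linear_combination (ν ^ 2) * h1 + h2
        rw [le_div_iff₀ (by linarith : (0:ℝ) < 2 * ν), hexp]
        linarith [sq_nonneg (ν * Real.sqrt t - Real.sqrt rsq)]
      · have hνz' : ν = 0 := hνz.symm
        have hr0 : rsq = 0 := by
          rw [hνz'] at hkey
          by_contra h
          have h2 : 0 < rsq := lt_of_le_of_ne hrsq0 (Ne.symm h)
          have h3 : 0 < rsq * (2 * s - 0) := mul_pos h2 (by linarith)
          nlinarith [hkey, h3]
        rw [hr0, hνz', Real.sqrt_zero]
        simp
    linarith [hlog, hcs0, hC]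
  -- membership
  have hmem : (1 / 2) * Real.log (2 * s - ν) - rsq / (2 * ν) + 1 / 2 ∈
      {v | ∃ x y c : ℝ, 0 < x ^ 2 + y ^ 2 + c ^ 2 ∧
        v = -(1 / 2) * Real.log (x ^ 2 + y ^ 2 + c ^ 2)
            + s * (x ^ 2 + y ^ 2 + c ^ 2) - r₁ * x - r₂ * y} := by
    rcases hrsq0.lt_or_eq with hr | hr
    · refine ⟨r₁ / ν, r₂ / ν, 0, ?_, (hval hr).symm⟩
      have hνp := hνpos hr
      have ht : (r₁ / ν) ^ 2 + (r₂ / ν) ^ 2 + 0 ^ 2 = 1 / (2 * s - ν) := by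
        field_simp
        nlinarith [hkey]
      rw [ht]
      exact one_div_pos.mpr h2sν
    · -- rsq = 0
      have hr0 : rsq = 0 := hr.symm
      have hν0' : ν = 0 := hν00 hr0
      have hr1 : r₁ = 0 := by
        have : r₁ ^ 2 = 0 := by nlinarith [sq_nonneg r₂, sq_nonneg r₁]
        exact pow_eq_zero_iff two_ne_zero |>.mp this
      have hr2 : r₂ = 0 := by
        have : r₂ ^ 2 = 0 := by nlinarith [sq_nonneg r₂, sq_nonneg r₁]
        exact pow_eq_zero_iff two_ne_zero |>.mp this
      refine ⟨0, 0, Real.sqrt (1 / (2 * s)), ?_, ?_⟩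
      · have : Real.sqrt (1 / (2 * s)) ^ 2 = 1 / (2 * s) :=
          Real.sq_sqrt (by positivity)
        rw [this]; positivity
      · have hc : (0:ℝ) ^ 2 + 0 ^ 2 + Real.sqrt (1 / (2 * s)) ^ 2 = 1 / (2 * s) := by
          rw [Real.sq_sqrt (by positivity : (0:ℝ) ≤ 1 / (2 * s))]; ring
        rw [hc, hr0, hν0', hr1, hr2,
          show (1:ℝ) / (2 * s) = (2 * s)⁻¹ from one_div _, Real.log_inv]
        have hss : s * (2 * s)⁻¹ = 1 / 2 := by
          field_simp
        rw [hss]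
        norm_num
  refine ⟨⟨hν0, hνlt⟩, hkey, ?_, hval⟩
  exact IsLeast.csInf_eq ⟨hmem, fun v hv => by
    obtain ⟨x, y, c, hpos, rfl⟩ := hv
    exact hlb x y c hpos⟩
end

section
/- The supremum sup_{λ > 0, η ∈ ℝ^h, η₀ ∈ ℝ} g(λ, η, η₀) is finite and is attained by some (λ*, η*, η₀*) with λ* > 0; i.e., an optimal bounded dual solution exists. -/
open MeasureTheory Real Filter

noncomputable section

def muI : Measure ℝ := volume.restrict (Set.Icc (-π) π)

def L2I (f : ℝ → ℝ) : Prop := MemLp f 2 muI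

def causalZero (a b : ℝ → ℝ) (n : ℕ) : Prop :=
  (∫ θ in (-π)..π, a θ * Real.cos ((n : ℝ) * θ))
    + (∫ θ in (-π)..π, b θ * Real.sin ((n : ℝ) * θ)) = 0

def powerAB (Sw a b : ℝ → ℝ) : ℝ :=
  (1 / (2 * π)) * ∫ θ in (-π)..π, ((a θ) ^ 2 + (b θ) ^ 2) * Sw θ

def rateAB (a b : ℝ → ℝ) : ℝ :=
  (1 / (4 * π)) * ∫ θ in (-π)..π, Real.log ((1 + a θ) ^ 2 + (b θ) ^ 2)

/-- Feedback capacity: causality constraints for all `n ≥ 0`. -/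
def Cfb (Sw : ℝ → ℝ) (P : ℝ) : ℝ :=
  sSup {R | ∃ a b : ℝ → ℝ, L2I a ∧ L2I b ∧ powerAB Sw a b ≤ P ∧
    (∀ n : ℕ, causalZero a b n) ∧ R = rateAB a b}

/-- `C_fb(h)`: causality constraints only for `0 ≤ n ≤ h`. -/
def CfbH (Sw : ℝ → ℝ) (P : ℝ) (h : ℕ) : ℝ :=
  sSup {R | ∃ a b : ℝ → ℝ, L2I a ∧ L2I b ∧ powerAB Sw a b ≤ P ∧
    (∀ n : ℕ, n ≤ h → causalZero a b n) ∧ R = rateAB a b}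

def dotA (h : ℕ) (η : Fin h → ℝ) (θ : ℝ) : ℝ :=
  ∑ k : Fin h, η k * Real.cos (((k.1 + 1 : ℕ) : ℝ) * θ)

def dotB (h : ℕ) (η : Fin h → ℝ) (θ : ℝ) : ℝ :=
  ∑ k : Fin h, η k * Real.sin (((k.1 + 1 : ℕ) : ℝ) * θ)

/-- `r²(θ)`. -/
def rsq (Sw : ℝ → ℝ) {h : ℕ} (lam : ℝ) (η : Fin h → ℝ) (η0 θ : ℝ) : ℝ :=
  (2 * lam * Sw θ + dotA h η θ + η0) ^ 2 + (dotB h η θ) ^ 2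

/-- `ν(θ) = (−r² + √(r⁴ + 8λS_w r²))/2`. -/
def nuf (Sw : ℝ → ℝ) {h : ℕ} (lam : ℝ) (η : Fin h → ℝ) (η0 θ : ℝ) : ℝ :=
  (-(rsq Sw lam η η0 θ)
    + Real.sqrt ((rsq Sw lam η η0 θ) ^ 2 + 8 * lam * Sw θ * rsq Sw lam η η0 θ)) / 2

/-- The dual function `g(λ,η,η₀)`.  (In Lean, `x / 0 = 0`, which implements the
convention `r²/(2ν) = 0` when `ν = 0`.) -/
def gdual (Sw : ℝ → ℝ) (P : ℝ) {h : ℕ} (lam : ℝ) (η : Fin h → ℝ) (η0 : ℝ) : ℝ :=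
  (1 / (2 * π)) * (∫ θ in (-π)..π,
      ((1 / 2) * Real.log (2 * lam * Sw θ - nuf Sw lam η η0 θ)
        - rsq Sw lam η η0 θ / (2 * nuf Sw lam η η0 θ) + lam * Sw θ))
    - lam * P + η0 + 1 / 2

namespace DualAux

variable {h : ℕ} {Sw : ℝ → ℝ} {lam : ℝ} {η : Fin h → ℝ} {η0 θ M : ℝ}

lemma rsq_nonneg (Sw : ℝ → ℝ) (lam : ℝ) (η : Fin h → ℝ) (η0 θ : ℝ) :
    0 ≤ rsq Sw lam η η0 θ := by
  unfold rsq; positivity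

lemma arg_nonneg (h1 : 0 < lam) (h2 : 0 < Sw θ) :
    0 ≤ (rsq Sw lam η η0 θ) ^ 2 + 8 * lam * Sw θ * rsq Sw lam η η0 θ := by
  have hr := rsq_nonneg Sw lam η η0 θ
  have : 0 ≤ 8 * lam * Sw θ * rsq Sw lam η η0 θ := by
    apply mul_nonneg _ hr; positivity
  nlinarith [sq_nonneg (rsq Sw lam η η0 θ)]

lemma nuf_quadratic (h1 : 0 < lam) (h2 : 0 < Sw θ) :
    (nuf Sw lam η η0 θ) ^ 2 + rsq Sw lam η η0 θ * nuf Sw lam η η0 θ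
      = 2 * lam * Sw θ * rsq Sw lam η η0 θ := by
  have hs := Real.sq_sqrt (arg_nonneg (η := η) (η0 := η0) h1 h2)
  unfold nuf
  set r := rsq Sw lam η η0 θ with hrdef
  set s := Real.sqrt (r ^ 2 + 8 * lam * Sw θ * r) with hsdef
  have : ((-r + s) / 2) ^ 2 + r * ((-r + s) / 2) = (s ^ 2 - r ^ 2) / 4 := by ring
  rw [this, hs]; ring

lemma nuf_nonneg (h1 : 0 < lam) (h2 : 0 < Sw θ) : 0 ≤ nuf Sw lam η η0 θ := by
  have hr := rsq_nonneg Sw lam η η0 θ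
  have h8 : 0 ≤ 8 * lam * Sw θ * rsq Sw lam η η0 θ := by
    apply mul_nonneg _ hr; positivity
  have h1' : rsq Sw lam η η0 θ ≤
      Real.sqrt ((rsq Sw lam η η0 θ) ^ 2 + 8 * lam * Sw θ * rsq Sw lam η η0 θ) := by
    have h' := Real.sqrt_le_sqrt (show (rsq Sw lam η η0 θ) ^ 2 ≤
      (rsq Sw lam η η0 θ) ^ 2 + 8 * lam * Sw θ * rsq Sw lam η η0 θ by linarith)
    rwa [Real.sqrt_sq hr] at h'
  unfold nuf; linarith
lemma nuf_lt (h1 : 0 < lam) (h2 : 0 < Sw θ) : nuf Sw lam η η0 θ < 2 * lam * Sw θ := by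
  have hr := rsq_nonneg Sw lam η η0 θ
  have harg := arg_nonneg (η := η) (η0 := η0) h1 h2
  have hlt : Real.sqrt ((rsq Sw lam η η0 θ) ^ 2 + 8 * lam * Sw θ * rsq Sw lam η η0 θ)
      < 4 * lam * Sw θ + rsq Sw lam η η0 θ := by
    have h4 : 0 ≤ 4 * lam * Sw θ + rsq Sw lam η η0 θ := by positivity
    calc Real.sqrt ((rsq Sw lam η η0 θ) ^ 2 + 8 * lam * Sw θ * rsq Sw lam η η0 θ)
        < Real.sqrt ((4 * lam * Sw θ + rsq Sw lam η η0 θ) ^ 2) := by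
          apply Real.sqrt_lt_sqrt harg; nlinarith [mul_pos h1 h2]
      _ = 4 * lam * Sw θ + rsq Sw lam η η0 θ := Real.sqrt_sq h4
  unfold nuf; linarith

lemma nuf_pos (h1 : 0 < lam) (h2 : 0 < Sw θ) (hr : 0 < rsq Sw lam η η0 θ) :
    0 < nuf Sw lam η η0 θ := by
  have hq := nuf_quadratic (η := η) (η0 := η0) h1 h2
  rcases eq_or_lt_of_le (nuf_nonneg (η := η) (η0 := η0) h1 h2) with he | hlt
  · exfalso; rw [← he] at hq; norm_num at hq
    rcases hq with (h' | h') | h' <;> linarith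
  · exact hlt

lemma key_div (h1 : 0 < lam) (h2 : 0 < Sw θ) :
    rsq Sw lam η η0 θ / (2 * nuf Sw lam η η0 θ)
      = nuf Sw lam η η0 θ / (2 * (2 * lam * Sw θ - nuf Sw lam η η0 θ)) := by
  rcases eq_or_lt_of_le (rsq_nonneg Sw lam η η0 θ) with hr | hr
  · have hq := nuf_quadratic (η := η) (η0 := η0) h1 h2
    rw [← hr] at hq ⊢
    have hnn := nuf_nonneg (η := η) (η0 := η0) h1 h2
    have : nuf Sw lam η η0 θ = 0 := by nlinarith
    rw [this]; simp
  · have hν := nuf_pos h1 h2 hr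
    have ht : 0 < 2 * lam * Sw θ - nuf Sw lam η η0 θ := by
      have := nuf_lt (η := η) (η0 := η0) h1 h2; linarith
    rw [div_eq_div_iff (by linarith) (by linarith)]
    have hq := nuf_quadratic (η := η) (η0 := η0) h1 h2
    nlinarith [hq]

lemma div_lower (h1 : 0 < lam) (h2 : 0 < Sw θ) :
    rsq Sw lam η η0 θ / (4 * lam * Sw θ) ≤ rsq Sw lam η η0 θ / (2 * nuf Sw lam η η0 θ) := by
  rcases eq_or_lt_of_le (rsq_nonneg Sw lam η η0 θ) with hr | hr
  · rw [← hr]; simp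
  · have hν := nuf_pos h1 h2 hr
    have hlt := nuf_lt (η := η) (η0 := η0) h1 h2
    apply div_le_div_of_nonneg_left hr.le (by linarith) (by linarith)


/-- The pointwise upper bound on the integrand. -/
lemma pointwise_bound (h1 : 0 < lam) (h2 : 0 < Sw θ) (h3 : Sw θ ≤ M) :
    (1 / 2) * Real.log (2 * lam * Sw θ - nuf Sw lam η η0 θ)
        - rsq Sw lam η η0 θ / (2 * nuf Sw lam η η0 θ) + lam * Sw θ
      ≤ (1 / 2) * Real.log (2 * lam * M) - (dotA h η θ + η0)
        - ((dotA h η θ + η0) ^ 2 + (dotB h η θ) ^ 2) / (4 * lam * M) := by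
  have hM : 0 < M := lt_of_lt_of_le h2 h3
  have ht : 0 < 2 * lam * Sw θ - nuf Sw lam η η0 θ := by
    have := nuf_lt (η := η) (η0 := η0) h1 h2; linarith
  have hlog : Real.log (2 * lam * Sw θ - nuf Sw lam η η0 θ) ≤ Real.log (2 * lam * M) := by
    apply Real.log_le_log ht
    have := nuf_nonneg (η := η) (η0 := η0) h1 h2
    nlinarith
  have hdiv := div_lower (η := η) (η0 := η0) h1 h2
  have hiden : lam * Sw θ - rsq Sw lam η η0 θ / (4 * lam * Sw θ)
      = -(dotA h η θ + η0) - ((dotA h η θ + η0) ^ 2 + (dotB h η θ) ^ 2) / (4 * lam * Sw θ) := by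
    unfold rsq
    field_simp
    ring
  have hmono : ((dotA h η θ + η0) ^ 2 + (dotB h η θ) ^ 2) / (4 * lam * M)
      ≤ ((dotA h η θ + η0) ^ 2 + (dotB h η θ) ^ 2) / (4 * lam * Sw θ) := by
    apply div_le_div_of_nonneg_left _ (by positivity) (by nlinarith)
    positivity
  linarith

/-- `∫_{-π}^{π} cos (c θ) dθ = 0` when `sin (c π) = 0`, `c ≠ 0`. -/
lemma int_cos_eq_zero {c : ℝ} (hc : c ≠ 0) (hs : Real.sin (c * π) = 0) :
    (∫ θ in (-π)..π, Real.cos (c * θ)) = 0 := by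
  rw [intervalIntegral.integral_comp_mul_left (fun x => Real.cos x) hc]
  rw [integral_cos]
  have : Real.sin (c * -π) = -Real.sin (c * π) := by
    rw [show c * -π = -(c * π) by ring, Real.sin_neg]
  rw [this, hs]
  simp

lemma int_cos_nat (n : ℕ) (hn : n ≠ 0) :
    (∫ θ in (-π)..π, Real.cos ((n : ℝ) * θ)) = 0 := by
  apply int_cos_eq_zero (by exact_mod_cast hn)
  exact Real.sin_nat_mul_pi n

lemma int_cos_diff (j k : ℕ) (hjk : j ≠ k) :
    (∫ θ in (-π)..π, Real.cos (((j : ℝ) - (k : ℝ)) * θ)) = 0 := by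
  apply int_cos_eq_zero
  · intro hc
    apply hjk
    have : (j : ℝ) = (k : ℝ) := by linarith [sub_eq_zero.mp hc]
    exact_mod_cast this
  · have : ((j : ℝ) - (k : ℝ)) * π = ((j : ℤ) - (k : ℤ) : ℤ) * π := by push_cast; ring
    rw [this]
    exact Real.sin_int_mul_pi _

/-- Orthogonality: `∫ (dotA² + dotB²) = 2π ∑ ηₖ²`. -/
lemma int_dot_sq (η : Fin h → ℝ) :
    (∫ θ in (-π)..π, ((dotA h η θ) ^ 2 + (dotB h η θ) ^ 2))
      = 2 * π * ∑ k : Fin h, (η k) ^ 2 := by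
  have key : ∀ θ : ℝ, (dotA h η θ) ^ 2 + (dotB h η θ) ^ 2
      = ∑ j : Fin h, ∑ k : Fin h,
          η j * η k * Real.cos ((((j : ℕ) : ℝ) - ((k : ℕ) : ℝ)) * θ) := by
    intro θ
    unfold dotA dotB
    rw [sq, Finset.sum_mul_sum, sq, Finset.sum_mul_sum, ← Finset.sum_add_distrib]
    apply Finset.sum_congr rfl
    intro j _
    rw [← Finset.sum_add_distrib]
    apply Finset.sum_congr rfl
    intro k _
    have hcos : Real.cos ((((j : ℕ) : ℝ) - ((k : ℕ) : ℝ)) * θ)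
        = Real.cos ((((j : ℕ) + 1 : ℕ) : ℝ) * θ) * Real.cos ((((k : ℕ) + 1 : ℕ) : ℝ) * θ)
          + Real.sin ((((j : ℕ) + 1 : ℕ) : ℝ) * θ) * Real.sin ((((k : ℕ) + 1 : ℕ) : ℝ) * θ) := by
      rw [← Real.cos_sub]
      congr 1
      push_cast
      ring
    rw [hcos]
    ring
  simp only [key]
  rw [intervalIntegral.integral_finset_sum]
  swap
  · intro j _
    apply Continuous.intervalIntegrable
    apply continuous_finset_sum
    intro k _
    exact continuous_const.mul ((Real.continuous_cos).comp (continuous_const.mul continuous_id))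
  have inner : ∀ j : Fin h,
      (∫ θ in (-π)..π, ∑ k : Fin h,
        η j * η k * Real.cos ((((j : ℕ) : ℝ) - ((k : ℕ) : ℝ)) * θ))
      = 2 * π * (η j) ^ 2 := by
    intro j
    rw [intervalIntegral.integral_finset_sum]
    swap
    · intro k _
      apply Continuous.intervalIntegrable
      exact continuous_const.mul ((Real.continuous_cos).comp (continuous_const.mul continuous_id))
    have term : ∀ k : Fin h,
        (∫ θ in (-π)..π, η j * η k * Real.cos ((((j : ℕ) : ℝ) - ((k : ℕ) : ℝ)) * θ))
        = if k = j then 2 * π * (η j) ^ 2 else 0 := by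
      intro k
      rw [intervalIntegral.integral_const_mul]
      by_cases hk : k = j
      · subst hk
        simp only [sub_self, zero_mul, Real.cos_zero]
        rw [intervalIntegral.integral_const]
        simp
        ring
      · rw [int_cos_diff _ _ (fun hjk => hk (Fin.ext hjk.symm))]
        simp [hk]
    rw [Finset.sum_congr rfl (fun k _ => term k)]
    rw [Finset.sum_ite_eq' Finset.univ j (fun _ => 2 * π * (η j) ^ 2)]
    simp
  rw [Finset.sum_congr rfl (fun j _ => inner j)]
  rw [← Finset.mul_sum]

/-- `∫ dotA = 0`. -/
lemma int_dotA (η : Fin h → ℝ) : (∫ θ in (-π)..π, dotA h η θ) = 0 := by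
  unfold dotA
  rw [intervalIntegral.integral_finset_sum]
  swap
  · intro k _
    apply Continuous.intervalIntegrable
    exact continuous_const.mul ((Real.continuous_cos).comp (continuous_const.mul continuous_id))
  apply Finset.sum_eq_zero
  intro k _
  rw [intervalIntegral.integral_const_mul, int_cos_nat _ (Nat.succ_ne_zero _)]
  ring
/-- Continuous version of the integrand. -/
def Fc (Sw : ℝ → ℝ) {h : ℕ} (lam : ℝ) (η : Fin h → ℝ) (η0 θ : ℝ) : ℝ :=
  (1 / 2) * Real.log (2 * lam * Sw θ - nuf Sw lam η η0 θ)
    - nuf Sw lam η η0 θ / (2 * (2 * lam * Sw θ - nuf Sw lam η η0 θ)) + lam * Sw θ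

lemma gdual_eq {P : ℝ} (hpos : ∀ θ, 0 < Sw θ) (h1 : 0 < lam) :
    gdual Sw P lam η η0
      = (1 / (2 * π)) * (∫ θ in (-π)..π, Fc Sw lam η η0 θ) - lam * P + η0 + 1 / 2 := by
  unfold gdual
  congr 3
  congr 1
  apply intervalIntegral.integral_congr
  intro θ _
  unfold Fc
  simp only []
  rw [key_div h1 (hpos θ)]

section Continuity

variable {a : ℝ}

lemma continuous_uncurry_Fc (hSwc : Continuous Sw) (hpos : ∀ θ, 0 < Sw θ) (ha : 0 < a) :
    Continuous (Function.uncurry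
      (fun (x : ℝ × (Fin h → ℝ) × ℝ) (θ : ℝ) => Fc Sw (max a x.1) x.2.1 x.2.2 θ)) := by
  have hlam : ∀ x : ℝ × (Fin h → ℝ) × ℝ, 0 < max a x.1 := fun x =>
    lt_of_lt_of_le ha (le_max_left _ _)
  have hlamc : Continuous (fun p : (ℝ × (Fin h → ℝ) × ℝ) × ℝ => max a p.1.1) :=
    continuous_const.max continuous_fst.fst
  have hSwc' : Continuous (fun p : (ℝ × (Fin h → ℝ) × ℝ) × ℝ => Sw p.2) :=
    hSwc.comp continuous_snd
  have hdA : Continuous (fun p : (ℝ × (Fin h → ℝ) × ℝ) × ℝ => dotA h p.1.2.1 p.2) := by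
    unfold dotA
    apply continuous_finset_sum
    intro k _
    exact ((continuous_apply k).comp continuous_fst.snd.fst).mul
      (Real.continuous_cos.comp (continuous_const.mul continuous_snd))
  have hdB : Continuous (fun p : (ℝ × (Fin h → ℝ) × ℝ) × ℝ => dotB h p.1.2.1 p.2) := by
    unfold dotB
    apply continuous_finset_sum
    intro k _
    exact ((continuous_apply k).comp continuous_fst.snd.fst).mul
      (Real.continuous_sin.comp (continuous_const.mul continuous_snd))
  have hη0 : Continuous (fun p : (ℝ × (Fin h → ℝ) × ℝ) × ℝ => p.1.2.2) :=
    continuous_fst.snd.snd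
  have hrsq : Continuous
      (fun p : (ℝ × (Fin h → ℝ) × ℝ) × ℝ => rsq Sw (max a p.1.1) p.1.2.1 p.1.2.2 p.2) := by
    unfold rsq
    apply Continuous.add
    · exact ((((continuous_const.mul hlamc).mul hSwc').add hdA).add hη0).pow 2
    · exact hdB.pow 2
  have hnuf : Continuous
      (fun p : (ℝ × (Fin h → ℝ) × ℝ) × ℝ => nuf Sw (max a p.1.1) p.1.2.1 p.1.2.2 p.2) := by
    unfold nuf
    apply Continuous.div_const
    apply Continuous.add hrsq.neg
    apply Real.continuous_sqrt.comp
    exact (hrsq.pow 2).add (((continuous_const.mul hlamc).mul hSwc').mul hrsq)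
  have htf : Continuous
      (fun p : (ℝ × (Fin h → ℝ) × ℝ) × ℝ =>
        2 * max a p.1.1 * Sw p.2 - nuf Sw (max a p.1.1) p.1.2.1 p.1.2.2 p.2) :=
    ((continuous_const.mul hlamc).mul hSwc').sub hnuf
  have htfpos : ∀ p : (ℝ × (Fin h → ℝ) × ℝ) × ℝ,
      0 < 2 * max a p.1.1 * Sw p.2 - nuf Sw (max a p.1.1) p.1.2.1 p.1.2.2 p.2 := by
    intro p
    have := nuf_lt (η := p.1.2.1) (η0 := p.1.2.2) (θ := p.2) (hlam p.1) (hpos p.2)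
    linarith
  have : Continuous (fun p : (ℝ × (Fin h → ℝ) × ℝ) × ℝ =>
      Fc Sw (max a p.1.1) p.1.2.1 p.1.2.2 p.2) := by
    unfold Fc
    apply Continuous.add
    · apply Continuous.sub
      · exact continuous_const.mul (htf.log (fun p => (htfpos p).ne'))
      · exact hnuf.div (continuous_const.mul htf)
          (fun p => by have := htfpos p; positivity)
    · exact (hlamc.mul hSwc')
  exact this

lemma continuous_G' {P : ℝ} (hSwc : Continuous Sw) (hpos : ∀ θ, 0 < Sw θ) (ha : 0 < a) :
    Continuous (fun x : ℝ × (Fin h → ℝ) × ℝ =>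
      gdual Sw P (max a x.1) x.2.1 x.2.2) := by
  have heq : (fun x : ℝ × (Fin h → ℝ) × ℝ => gdual Sw P (max a x.1) x.2.1 x.2.2)
      = fun x => (1 / (2 * π)) *
          (∫ θ in (-π)..π, Fc Sw (max a x.1) x.2.1 x.2.2 θ)
            - (max a x.1) * P + x.2.2 + 1 / 2 := by
    funext x
    exact gdual_eq hpos (lt_of_lt_of_le ha (le_max_left _ _))
  rw [heq]
  have hint : Continuous (fun x : ℝ × (Fin h → ℝ) × ℝ =>
      ∫ θ in (-π)..π, Fc Sw (max a x.1) x.2.1 x.2.2 θ) := by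
    apply intervalIntegral.continuous_parametric_intervalIntegral_of_continuous'
    exact continuous_uncurry_Fc hSwc hpos ha
  exact (((continuous_const.mul hint).sub
    ((continuous_const.max continuous_fst).mul continuous_const)).add
      continuous_snd.snd).add continuous_const

lemma continuous_Fc_theta (hSwc : Continuous Sw) (hpos : ∀ θ, 0 < Sw θ) (h1 : 0 < lam) :
    Continuous (fun θ => Fc Sw lam η η0 θ) := by
  have := (continuous_uncurry_Fc (h := h) hSwc hpos h1).uncurry_left (lam, η, η0)
  simpa [max_self] using this

end Continuity
section Bound

lemma neg_pi_le_pi : (-π : ℝ) ≤ π := by linarith [Real.pi_pos]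

lemma cont_dotA : Continuous (fun θ => dotA h η θ) := by
  unfold dotA
  apply continuous_finset_sum
  intro k _
  exact continuous_const.mul (Real.continuous_cos.comp (continuous_const.mul continuous_id))

lemma cont_u : Continuous (fun θ => dotA h η θ + η0) :=
  cont_dotA.add continuous_const

lemma cont_B : Continuous (fun θ => dotB h η θ) := by
  unfold dotB
  apply continuous_finset_sum
  intro k _
  exact continuous_const.mul (Real.continuous_sin.comp (continuous_const.mul continuous_id))

/-- The coercive upper bound on `gdual`. -/
lemma gdual_le {P M : ℝ} (hSwc : Continuous Sw) (hpos : ∀ θ, 0 < Sw θ)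
    (hM : ∀ θ ∈ Set.Icc (-π) π, Sw θ ≤ M) (h1 : 0 < lam) (η : Fin h → ℝ) (η0 : ℝ) :
    gdual Sw P lam η η0 ≤ (1 / 2) * Real.log (2 * lam * M) - lam * P + 1 / 2
      - (η0 ^ 2 + ∑ k : Fin h, (η k) ^ 2) / (4 * lam * M) := by
  have hM0 : 0 < M := lt_of_lt_of_le (hpos 0) (hM 0 (by constructor <;> linarith [Real.pi_pos]))
  have hπ : (0:ℝ) < π := Real.pi_pos
  set Φ : ℝ → ℝ := fun θ => (1 / 2) * Real.log (2 * lam * M) - (dotA h η θ + η0)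
      - ((dotA h η θ + η0) ^ 2 + (dotB h η θ) ^ 2) / (4 * lam * M) with hΦdef
  have hΦc : Continuous Φ := by
    apply Continuous.sub (Continuous.sub continuous_const cont_u)
    exact ((cont_u.pow 2).add (cont_B.pow 2)).div_const _
  have hFcc : Continuous (fun θ => Fc Sw lam η η0 θ) := continuous_Fc_theta hSwc hpos h1
  -- pointwise bound
  have hptw : ∀ θ ∈ Set.Icc (-π) π, Fc Sw lam η η0 θ ≤ Φ θ := by
    intro θ hθ
    have heq : Fc Sw lam η η0 θ
        = (1 / 2) * Real.log (2 * lam * Sw θ - nuf Sw lam η η0 θ)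
            - rsq Sw lam η η0 θ / (2 * nuf Sw lam η η0 θ) + lam * Sw θ := by
      unfold Fc
      rw [key_div h1 (hpos θ)]
    rw [heq]
    exact pointwise_bound h1 (hpos θ) (hM θ hθ)
  have hint : (∫ θ in (-π)..π, Fc Sw lam η η0 θ) ≤ ∫ θ in (-π)..π, Φ θ :=
    intervalIntegral.integral_mono_on neg_pi_le_pi
      (hFcc.intervalIntegrable _ _) (hΦc.intervalIntegrable _ _) hptw
  -- compute ∫ Φ
  have hu_int : (∫ θ in (-π)..π, (dotA h η θ + η0)) = 2 * π * η0 := by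
    rw [intervalIntegral.integral_add (cont_dotA.intervalIntegrable _ _)
      (continuous_const.intervalIntegrable _ _), int_dotA,
      intervalIntegral.integral_const, zero_add, smul_eq_mul]
    ring
  have hv_int : (∫ θ in (-π)..π, ((dotA h η θ + η0) ^ 2 + (dotB h η θ) ^ 2))
      = 2 * π * (η0 ^ 2 + ∑ k : Fin h, (η k) ^ 2) := by
    have hsplit : (fun θ => (dotA h η θ + η0) ^ 2 + (dotB h η θ) ^ 2)
        = fun θ => ((dotA h η θ) ^ 2 + (dotB h η θ) ^ 2)
            + (2 * η0 * dotA h η θ + η0 ^ 2) := by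
      funext θ; ring
    rw [hsplit]
    rw [intervalIntegral.integral_add
      (by exact ((cont_dotA.pow 2).add (cont_B.pow 2)).intervalIntegrable _ _ :
        IntervalIntegrable (fun θ => (dotA h η θ) ^ 2 + (dotB h η θ) ^ 2) volume (-π) π)
      (by exact ((continuous_const.mul cont_dotA).add continuous_const).intervalIntegrable _ _ :
        IntervalIntegrable (fun θ => 2 * η0 * dotA h η θ + η0 ^ 2) volume (-π) π)]
    rw [int_dot_sq]
    rw [intervalIntegral.integral_add
      (by exact (continuous_const.mul cont_dotA).intervalIntegrable _ _ :
        IntervalIntegrable (fun θ => 2 * η0 * dotA h η θ) volume (-π) π)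
      (continuous_const.intervalIntegrable _ _)]
    rw [intervalIntegral.integral_const_mul, int_dotA,
      intervalIntegral.integral_const, smul_eq_mul]
    ring
  have hΦ_int : (∫ θ in (-π)..π, Φ θ)
      = 2 * π * ((1 / 2) * Real.log (2 * lam * M) - η0
          - (η0 ^ 2 + ∑ k : Fin h, (η k) ^ 2) / (4 * lam * M)) := by
    rw [hΦdef]
    rw [intervalIntegral.integral_sub
      (by exact (continuous_const.sub cont_u).intervalIntegrable _ _ :
        IntervalIntegrable (fun θ => (1 / 2) * Real.log (2 * lam * M) - (dotA h η θ + η0))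
          volume (-π) π)
      (by exact (((cont_u.pow 2).add (cont_B.pow 2)).div_const _).intervalIntegrable _ _ :
        IntervalIntegrable (fun θ => ((dotA h η θ + η0) ^ 2 + (dotB h η θ) ^ 2) / (4 * lam * M))
          volume (-π) π)]
    rw [intervalIntegral.integral_sub
      (continuous_const.intervalIntegrable _ _)
      (cont_u.intervalIntegrable _ _)]
    rw [intervalIntegral.integral_div, hu_int, hv_int,
      intervalIntegral.integral_const, smul_eq_mul]
    have h4 : (4 : ℝ) * lam * M ≠ 0 := by positivity
    field_simp
    ring
  -- put it together
  rw [gdual_eq hpos h1]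
  have hfinal : (1 / (2 * π)) * (∫ θ in (-π)..π, Fc Sw lam η η0 θ)
      ≤ (1 / 2) * Real.log (2 * lam * M) - η0
          - (η0 ^ 2 + ∑ k : Fin h, (η k) ^ 2) / (4 * lam * M) := by
    calc (1 / (2 * π)) * (∫ θ in (-π)..π, Fc Sw lam η η0 θ)
        ≤ (1 / (2 * π)) * (∫ θ in (-π)..π, Φ θ) := by
          apply mul_le_mul_of_nonneg_left hint
          positivity
      _ = (1 / 2) * Real.log (2 * lam * M) - η0
          - (η0 ^ 2 + ∑ k : Fin h, (η k) ^ 2) / (4 * lam * M) := by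
          rw [hΦ_int]
          field_simp
  linarith

end Bound

lemma small_lam_bound {lam M g0 P D : ℝ} (hM0 : 0 < M) (hl : 0 < lam) (hP : 0 < P) (hD : 0 ≤ D)
    (hsmall : 2 * lam * M ≤ Real.exp (2 * (g0 - 1))) :
    (1/2) * Real.log (2 * lam * M) - lam * P + 1/2 - D / (4 * lam * M) < g0 := by
  have hlog : Real.log (2 * lam * M) ≤ 2 * (g0 - 1) := by
    calc Real.log (2 * lam * M) ≤ Real.log (Real.exp (2 * (g0 - 1))) :=
          Real.log_le_log (by positivity) hsmall
      _ = 2 * (g0 - 1) := Real.log_exp _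
  have h1 : 0 ≤ D / (4 * lam * M) := by positivity
  nlinarith

lemma large_lam_bound {lam M g0 P D : ℝ} (hM0 : 0 < M) (hP : 0 < P) (hD : 0 ≤ D)
    (h1 : 1 ≤ lam) (h4P : 4 / P ^ 2 ≤ lam)
    (hX : (2 / P) * ((1/2) * |Real.log (2 * M)| + 2 + |g0|) ≤ lam) :
    (1/2) * Real.log (2 * lam * M) - lam * P + 1/2 - D / (4 * lam * M) < g0 := by
  have hl0 : (0:ℝ) < lam := by linarith
  have hsqpos : 0 < Real.sqrt lam := Real.sqrt_pos.mpr hl0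
  have hlog1 : Real.log lam ≤ 2 * (Real.sqrt lam - 1) := by
    have hls : Real.log (Real.sqrt lam) = Real.log lam / 2 := Real.log_sqrt hl0.le
    have := Real.log_le_sub_one_of_pos hsqpos
    linarith
  have h2P : 2 / P ≤ Real.sqrt lam := by
    rw [show (2 / P) = Real.sqrt ((2 / P) ^ 2) from (Real.sqrt_sq (by positivity)).symm]
    apply Real.sqrt_le_sqrt
    calc (2 / P) ^ 2 = 4 / P ^ 2 := by ring
      _ ≤ lam := h4P
  have hms : Real.sqrt lam * Real.sqrt lam = lam := Real.mul_self_sqrt hl0.le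
  have hsq : Real.sqrt lam ≤ lam * P / 2 := by
    have e1 : (2/P) * Real.sqrt lam ≤ lam := by nlinarith [mul_le_mul_of_nonneg_right h2P hsqpos.le]
    have e2 := mul_le_mul_of_nonneg_right e1 hP.le
    have e3 : (2/P) * Real.sqrt lam * P = 2 * Real.sqrt lam := by field_simp
    rw [e3] at e2
    linarith
  have hX2 : (1/2) * |Real.log (2 * M)| + 2 + |g0| ≤ lam * P / 2 := by
    have e2 := mul_le_mul_of_nonneg_right hX (by positivity : (0:ℝ) ≤ P / 2)
    have e3 : (2/P) * ((1/2) * |Real.log (2 * M)| + 2 + |g0|) * (P/2)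
        = (1/2) * |Real.log (2 * M)| + 2 + |g0| := by field_simp
    rw [e3] at e2
    linarith
  have hlog2 : Real.log (2 * lam * M) = Real.log (2 * M) + Real.log lam := by
    rw [show 2 * lam * M = (2 * M) * lam by ring,
      Real.log_mul (by positivity) (by positivity)]
  have habs : Real.log (2 * M) ≤ |Real.log (2 * M)| := le_abs_self _
  have hg0abs : -|g0| ≤ g0 := neg_abs_le _
  have hDd : 0 ≤ D / (4 * lam * M) := by positivity
  nlinarith

lemma mid_lam_bound {lam b M g0 P D : ℝ} (hM0 : 0 < M) (hl : 0 < lam) (hlb : lam ≤ b)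
    (hP : 0 < P)
    (hD : 4 * b * M * ((1/2) * |Real.log (2 * b * M)| + 2 + |g0|) < D) :
    (1/2) * Real.log (2 * lam * M) - lam * P + 1/2 - D / (4 * lam * M) < g0 := by
  have hb0 : 0 < b := lt_of_lt_of_le hl hlb
  have hD0 : 0 ≤ D := le_trans (by positivity) hD.le
  have hlogb : Real.log (2 * lam * M) ≤ |Real.log (2 * b * M)| := by
    calc Real.log (2 * lam * M) ≤ Real.log (2 * b * M) :=
          Real.log_le_log (by positivity) (by nlinarith)
      _ ≤ |Real.log (2 * b * M)| := le_abs_self _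
  have hdiv1 : D / (4 * b * M) ≤ D / (4 * lam * M) :=
    div_le_div_of_nonneg_left hD0 (by positivity) (by nlinarith)
  have hdiv2 : (1/2) * |Real.log (2 * b * M)| + 2 + |g0| < D / (4 * b * M) := by
    rw [lt_div_iff₀ (by positivity)]
    nlinarith
  have hg0abs : -|g0| ≤ g0 := neg_abs_le _
  have hPl : 0 ≤ lam * P := by positivity
  nlinarith


lemma abs_le_of_sq_le {y R : ℝ} (hR : 0 ≤ R) (hy : y ^ 2 ≤ R ^ 2) : |y| ≤ R := by
  have := Real.sqrt_le_sqrt hy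
  rwa [Real.sqrt_sq_eq_abs, Real.sqrt_sq hR] at this
end DualAux

open DualAux in
set_option maxHeartbeats 1000000 in
/-- the dual supremum `sup_{λ>0, η, η₀} g(λ,η,η₀)` is finite and is
attained by some `(λ*, η*, η₀*)` with `λ* > 0`. -/
theorem dual_optimum_exists
    (p q : Polynomial ℝ)
    (hq : ∀ z : ℂ, (q.map (algebraMap ℝ ℂ)).eval z = 0 → ‖z‖ < 1)
    (hp : ∀ z : ℂ, ‖z‖ = 1 → (p.map (algebraMap ℝ ℂ)).eval z ≠ 0)
    (Sw : ℝ → ℝ)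
    (hSw : ∀ θ : ℝ, Sw θ =
      (‖(p.map (algebraMap ℝ ℂ)).eval (Complex.exp ((θ : ℂ) * Complex.I)) /
        (q.map (algebraMap ℝ ℂ)).eval (Complex.exp ((θ : ℂ) * Complex.I))‖) ^ 2)
    (hSwnc : ¬ ∃ cst : ℝ, ∀ θ ∈ Set.Icc (-π) π, Sw θ = cst)
    (P : ℝ) (hP : 0 < P)
    (h : ℕ) (hh : 1 ≤ h) :
    ∃ (lam : ℝ) (η : Fin h → ℝ) (η0 : ℝ), 0 < lam ∧
      (∀ (lam' : ℝ) (η' : Fin h → ℝ) (η0' : ℝ), 0 < lam' →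
        gdual Sw P lam' η' η0' ≤ gdual Sw P lam η η0) ∧
      gdual Sw P lam η η0 =
        sSup {y | ∃ (lam' : ℝ) (η' : Fin h → ℝ) (η0' : ℝ),
          0 < lam' ∧ y = gdual Sw P lam' η' η0'} := by
  classical
  have hπ : (0:ℝ) < π := Real.pi_pos
  -- basic facts about Sw
  have habs1 : ∀ θ : ℝ, ‖Complex.exp ((θ : ℂ) * Complex.I)‖ = 1 := by
    intro θ
    rw [Complex.norm_exp]
    simp [Complex.mul_re]
  have hqe : ∀ θ : ℝ,
      (q.map (algebraMap ℝ ℂ)).eval (Complex.exp ((θ : ℂ) * Complex.I)) ≠ 0 := by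
    intro θ hz
    have := hq _ hz
    rw [habs1 θ] at this
    exact absurd this (by norm_num)
  have hpe : ∀ θ : ℝ,
      (p.map (algebraMap ℝ ℂ)).eval (Complex.exp ((θ : ℂ) * Complex.I)) ≠ 0 :=
    fun θ => hp _ (habs1 θ)
  have hec : Continuous (fun θ : ℝ => Complex.exp ((θ : ℂ) * Complex.I)) :=
    Complex.continuous_exp.comp (Complex.continuous_ofReal.mul continuous_const)
  have hSwc : Continuous Sw := by
    have hc : Continuous (fun θ : ℝ =>
        (‖(p.map (algebraMap ℝ ℂ)).eval (Complex.exp ((θ : ℂ) * Complex.I)) /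
          (q.map (algebraMap ℝ ℂ)).eval (Complex.exp ((θ : ℂ) * Complex.I))‖) ^ 2) := by
      apply Continuous.pow
      apply continuous_norm.comp
      exact (((p.map (algebraMap ℝ ℂ)).continuous).comp hec).div
        (((q.map (algebraMap ℝ ℂ)).continuous).comp hec) hqe
    exact hc.congr (fun θ => (hSw θ).symm)
  have hpos : ∀ θ : ℝ, 0 < Sw θ := by
    intro θ
    rw [hSw θ]
    exact pow_pos (norm_pos_iff.mpr (div_ne_zero (hpe θ) (hqe θ))) 2
  -- maximum of Sw on the interval
  obtain ⟨θM, hθMmem, hθMmax⟩ := (isCompact_Icc (a := -π) (b := π)).exists_isMaxOn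
    ⟨0, by constructor <;> linarith⟩ hSwc.continuousOn
  set M := Sw θM with hMdef
  have hM : ∀ θ ∈ Set.Icc (-π) π, Sw θ ≤ M := fun θ hθ => hθMmax hθ
  have hM0 : 0 < M := hpos θM
  -- constants
  obtain ⟨G, hGdef⟩ : ∃ G' : ℝ × (Fin h → ℝ) × ℝ → ℝ,
      G' = fun x => gdual Sw P x.1 x.2.1 x.2.2 := ⟨_, rfl⟩
  obtain ⟨g0, hg0def⟩ : ∃ g0' : ℝ, g0' = G ((1:ℝ), ((0 : Fin h → ℝ), (0:ℝ))) := ⟨_, rfl⟩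
  set a : ℝ := min 1 (Real.exp (2 * (g0 - 1)) / (2 * M)) with hadef
  have ha : 0 < a := lt_min one_pos (by positivity)
  have ha1 : a ≤ 1 := min_le_left _ _
  set b : ℝ := max 1 (max (4 / P ^ 2)
    ((2 / P) * ((1/2) * |Real.log (2 * M)| + 2 + |g0|))) with hbdef
  have hb1 : (1:ℝ) ≤ b := le_max_left _ _
  have hb0 : 0 < b := lt_of_lt_of_le one_pos hb1
  set Ratom : ℝ := 4 * b * M * ((1/2) * |Real.log (2 * b * M)| + 2 + |g0|) with hRatomdef
  have hRatom : 0 ≤ Ratom := by positivity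
  set R := Real.sqrt Ratom with hRdef
  have hR : 0 ≤ R := Real.sqrt_nonneg _
  have hRsq : R ^ 2 = Ratom := Real.sq_sqrt hRatom
  -- compact set
  set K : Set (ℝ × (Fin h → ℝ) × ℝ) :=
    Set.Icc a b ×ˢ (Metric.closedBall 0 R ×ˢ Set.Icc (-R) R) with hKdef
  have hKc : IsCompact K :=
    isCompact_Icc.prod ((isCompact_closedBall _ _).prod isCompact_Icc)
  have hmem1 : ((1:ℝ), ((0 : Fin h → ℝ), (0:ℝ))) ∈ K := by
    refine ⟨⟨ha1, hb1⟩, ?_, ?_⟩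
    · show (0 : Fin h → ℝ) ∈ Metric.closedBall 0 R
      simpa using hR
    · show (0:ℝ) ∈ Set.Icc (-R) R
      constructor <;> linarith
  have hGcont : ContinuousOn G K := by
    have hG' := continuous_G' (h := h) (P := P) hSwc hpos ha
    apply hG'.continuousOn.congr
    intro x hx
    have hax : a ≤ x.1 := hx.1.1
    rw [hGdef]
    simp only []
    rw [max_eq_right hax]
  obtain ⟨xs, hxsK, hxsmax⟩ := hKc.exists_isMaxOn ⟨_, hmem1⟩ hGcont
  have hg0le : g0 ≤ G xs := by rw [hg0def]; exact hxsmax hmem1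
  -- the global bound
  have hglobal : ∀ (lam' : ℝ) (η' : Fin h → ℝ) (η0' : ℝ), 0 < lam' →
      gdual Sw P lam' η' η0' ≤ G xs := by
    intro lam' η' η0' hl
    by_cases hin : ((lam', (η', η0')) : ℝ × (Fin h → ℝ) × ℝ) ∈ K
    · have h2 : G (lam', (η', η0')) ≤ G xs := hxsmax hin
      have h3 : G (lam', (η', η0')) = gdual Sw P lam' η' η0' := by rw [hGdef]
      rw [h3] at h2
      exact h2
    · have hbnd := gdual_le (P := P) hSwc hpos hM hl η' η0'
      set D : ℝ := η0' ^ 2 + ∑ k : Fin h, (η' k) ^ 2 with hDdef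
      have hD0 : 0 ≤ D := by positivity
      rcases lt_or_ge lam' a with hcase | hcase
      · -- small lambda
        have hsmall : 2 * lam' * M ≤ Real.exp (2 * (g0 - 1)) := by
          have h3 : a ≤ Real.exp (2 * (g0 - 1)) / (2 * M) := min_le_right _ _
          have h4 : lam' ≤ Real.exp (2 * (g0 - 1)) / (2 * M) := by linarith
          calc 2 * lam' * M ≤ 2 * (Real.exp (2 * (g0 - 1)) / (2 * M)) * M := by nlinarith
            _ = Real.exp (2 * (g0 - 1)) := by field_simp
        have := small_lam_bound (g0 := g0) hM0 hl hP hD0 hsmall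
        linarith
      · rcases lt_or_ge b lam' with hcase2 | hcase2
        · -- large lambda
          have h1l : (1:ℝ) ≤ lam' := le_trans hb1 hcase2.le
          have h4P : 4 / P ^ 2 ≤ lam' :=
            le_trans (le_trans (le_max_left _ _) (le_max_right _ _)) hcase2.le
          have hX : (2 / P) * ((1/2) * |Real.log (2 * M)| + 2 + |g0|) ≤ lam' :=
            le_trans (le_trans (le_max_right _ _) (le_max_right _ _)) hcase2.le
          have := large_lam_bound (g0 := g0) hM0 hP hD0 h1l h4P hX
          linarith
        · -- mid lambda: D must be large
          have hDgt : Ratom < D := by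
            by_contra hDle
            push_neg at hDle
            apply hin
            refine ⟨⟨hcase, hcase2⟩, ?_, ?_⟩
            · show η' ∈ Metric.closedBall 0 R
              rw [Metric.mem_closedBall, dist_zero_right,
                pi_norm_le_iff_of_nonneg hR]
              intro k
              apply abs_le_of_sq_le hR
              rw [hRsq]
              have hs : (η' k) ^ 2 ≤ ∑ j : Fin h, (η' j) ^ 2 :=
                Finset.single_le_sum (fun j _ => sq_nonneg (η' j)) (Finset.mem_univ k)
              have h0 : 0 ≤ η0' ^ 2 := sq_nonneg _
              linarith
            · show η0' ∈ Set.Icc (-R) R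
              rw [Set.mem_Icc, ← abs_le]
              apply abs_le_of_sq_le hR
              rw [hRsq]
              have hs : 0 ≤ ∑ j : Fin h, (η' j) ^ 2 := by positivity
              linarith
          have := mid_lam_bound (g0 := g0) hM0 hl hcase2 hP hDgt
          linarith
  -- conclude
  have hGxs : G xs = gdual Sw P xs.1 xs.2.1 xs.2.2 := by rw [hGdef]
  rw [hGxs] at hglobal
  refine ⟨xs.1, xs.2.1, xs.2.2, lt_of_lt_of_le ha hxsK.1.1, ?_, ?_⟩
  · intro lam' η' η0' hl
    exact hglobal lam' η' η0' hl
  · have hmemS : gdual Sw P xs.1 xs.2.1 xs.2.2 ∈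
        {y | ∃ (lam' : ℝ) (η' : Fin h → ℝ) (η0' : ℝ),
          0 < lam' ∧ y = gdual Sw P lam' η' η0'} :=
      ⟨xs.1, xs.2.1, xs.2.2, lt_of_lt_of_le ha hxsK.1.1, rfl⟩
    have hub : ∀ y ∈ {y | ∃ (lam' : ℝ) (η' : Fin h → ℝ) (η0' : ℝ),
        0 < lam' ∧ y = gdual Sw P lam' η' η0'}, y ≤ gdual Sw P xs.1 xs.2.1 xs.2.2 := by
      rintro y ⟨l, e, e0, hl, rfl⟩
      exact hglobal l e e0 hl
    exact le_antisymm (le_csSup ⟨_, hub⟩ hmemS) (csSup_le ⟨_, hmemS⟩ hub)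
end
end

section
/- For every λ > 0, η ∈ ℝ^h, and η₀ ∈ ℝ, the set { θ ∈ [−π,π] : 2λS_w(θ) + η·A(θ) + η₀ = 0 and η·B(θ) = 0 } is finite, where A(θ) = (cos θ, …, cos hθ) and B(θ) = (sin θ, …, sin hθ). Equivalently, the function r²(θ) = (2λS_w(θ) + η·A(θ) + η₀)² + (η·B(θ))² vanishes at only finitely many θ ∈ [−π,π]. -/
open MeasureTheory Real Filter

noncomputable section

/-! ### Auxiliary lemmas -/

lemma aux_expI_analytic :
    AnalyticOnNhd ℝ (fun θ : ℝ => Complex.exp ((θ : ℂ) * Complex.I)) Set.univ := by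
  intro x _
  have h1 : AnalyticAt ℝ (fun θ : ℝ => (θ : ℂ) * Complex.I) x :=
    (Complex.ofRealCLM.analyticAt x).mul analyticAt_const
  exact (analyticAt_cexp.restrictScalars).comp h1

lemma aux_cos_analytic (c : ℝ) :
    AnalyticOnNhd ℝ (fun θ : ℝ => Real.cos (c * θ)) Set.univ := by
  intro x _
  have h2 : AnalyticAt ℝ (fun θ : ℝ => c * θ) x := analyticAt_const.mul analyticAt_id
  have h1 : AnalyticAt ℝ (fun θ : ℝ => Complex.exp (((c * θ : ℝ) : ℂ) * Complex.I)) x :=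
    (aux_expI_analytic (c * x) trivial).comp h2
  have he : (fun θ : ℝ => Real.cos (c * θ)) = fun θ : ℝ =>
      Complex.reCLM (Complex.exp (((c * θ : ℝ) : ℂ) * Complex.I)) := by
    funext θ; simp only [Complex.reCLM_apply, Complex.exp_ofReal_mul_I_re]
  rw [he]
  exact (Complex.reCLM.analyticAt _).comp h1

lemma aux_sin_analytic (c : ℝ) :
    AnalyticOnNhd ℝ (fun θ : ℝ => Real.sin (c * θ)) Set.univ := by
  intro x _
  have h2 : AnalyticAt ℝ (fun θ : ℝ => c * θ) x := analyticAt_const.mul analyticAt_id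
  have h1 : AnalyticAt ℝ (fun θ : ℝ => Complex.exp (((c * θ : ℝ) : ℂ) * Complex.I)) x :=
    (aux_expI_analytic (c * x) trivial).comp h2
  have he : (fun θ : ℝ => Real.sin (c * θ)) = fun θ : ℝ =>
      Complex.imCLM (Complex.exp (((c * θ : ℝ) : ℂ) * Complex.I)) := by
    funext θ; simp only [Complex.imCLM_apply, Complex.exp_ofReal_mul_I_im]
  rw [he]
  exact (Complex.imCLM.analyticAt _).comp h1

lemma aux_normSq_analytic (f : ℝ → ℂ) (hf : AnalyticOnNhd ℝ f Set.univ) :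
    AnalyticOnNhd ℝ (fun θ : ℝ => Complex.normSq (f θ)) Set.univ := by
  have he : (fun θ : ℝ => Complex.normSq (f θ)) =
      fun θ : ℝ => Complex.reCLM (f θ) ^ 2 + Complex.imCLM (f θ) ^ 2 := by
    funext θ
    simp only [Complex.reCLM_apply, Complex.imCLM_apply, Complex.normSq_apply]
    ring
  rw [he]
  intro x hx
  exact (((Complex.reCLM.analyticAt _).comp (hf x hx)).pow 2).add
    (((Complex.imCLM.analyticAt _).comp (hf x hx)).pow 2)

lemma aux_Sw_analytic (p q : Polynomial ℝ)
    (hq : ∀ z : ℂ, (q.map (algebraMap ℝ ℂ)).eval z = 0 → ‖z‖ < 1)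
    (Sw : ℝ → ℝ)
    (hSw : ∀ θ : ℝ, Sw θ =
      (‖((p.map (algebraMap ℝ ℂ)).eval (Complex.exp ((θ : ℂ) * Complex.I)) /
        (q.map (algebraMap ℝ ℂ)).eval (Complex.exp ((θ : ℂ) * Complex.I)))‖) ^ 2) :
    AnalyticOnNhd ℝ Sw Set.univ := by
  have hP : AnalyticOnNhd ℝ
      (fun θ : ℝ => (p.map (algebraMap ℝ ℂ)).eval (Complex.exp ((θ : ℂ) * Complex.I)))
      Set.univ := by
    intro x hx
    exact (AnalyticOnNhd.eval_polynomial (p.map (algebraMap ℝ ℂ)) _ trivial).comp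
      (aux_expI_analytic x hx)
  have hQ : AnalyticOnNhd ℝ
      (fun θ : ℝ => (q.map (algebraMap ℝ ℂ)).eval (Complex.exp ((θ : ℂ) * Complex.I)))
      Set.univ := by
    intro x hx
    exact (AnalyticOnNhd.eval_polynomial (q.map (algebraMap ℝ ℂ)) _ trivial).comp
      (aux_expI_analytic x hx)
  have hqne : ∀ x : ℝ,
      Complex.normSq ((q.map (algebraMap ℝ ℂ)).eval (Complex.exp ((x : ℂ) * Complex.I))) ≠ 0 := by
    intro x
    rw [ne_eq, Complex.normSq_eq_zero]
    intro h0
    have := hq _ h0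
    rw [show ((x : ℂ) * Complex.I) = ((x : ℝ) : ℂ) * Complex.I from rfl,
      Complex.norm_exp_ofReal_mul_I] at this
    linarith
  have he : Sw = fun θ : ℝ =>
      Complex.normSq ((p.map (algebraMap ℝ ℂ)).eval (Complex.exp ((θ : ℂ) * Complex.I))) /
      Complex.normSq ((q.map (algebraMap ℝ ℂ)).eval (Complex.exp ((θ : ℂ) * Complex.I))) := by
    funext θ
    rw [hSw θ, norm_div, div_pow, Complex.sq_norm, Complex.sq_norm]
  rw [he]
  intro x hx
  exact (aux_normSq_analytic _ hP x hx).div (aux_normSq_analytic _ hQ x hx) (hqne x)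

lemma aux_cos_int_integral (k : ℤ) (hk : k ≠ 0) :
    ∫ θ in (-π)..π, Real.cos ((k : ℝ) * θ) = 0 := by
  have hk' : (k : ℝ) ≠ 0 := Int.cast_ne_zero.mpr hk
  have h1 : ∀ x ∈ Set.uIcc (-π) π,
      HasDerivAt (fun θ : ℝ => Real.sin ((k : ℝ) * θ) / k) (Real.cos ((k : ℝ) * x)) x := by
    intro x _
    have hd : HasDerivAt (fun θ : ℝ => (k : ℝ) * θ) (k : ℝ) x := by
      simpa using (hasDerivAt_id x).const_mul (k : ℝ)
    have h2 := (Real.hasDerivAt_sin ((k : ℝ) * x)).comp x hd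
    have h3 := h2.div_const (k : ℝ)
    rw [mul_div_cancel_right₀ _ hk'] at h3
    exact h3
  rw [intervalIntegral.integral_eq_sub_of_hasDerivAt h1
    (Continuous.intervalIntegrable (by continuity) _ _)]
  have h4 : Real.sin ((k : ℝ) * π) = 0 := Real.sin_int_mul_pi k
  have h5 : Real.sin ((k : ℝ) * (-π)) = 0 := by
    rw [mul_neg, Real.sin_neg, h4, neg_zero]
  rw [h4, h5]
  simp

lemma aux_sin_orth (a b : ℕ) (ha : 1 ≤ a) (hb : 1 ≤ b) :
    ∫ θ in (-π)..π, Real.sin ((a : ℝ) * θ) * Real.sin ((b : ℝ) * θ)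
      = if a = b then π else 0 := by
  have hid : ∀ θ : ℝ, Real.sin ((a : ℝ) * θ) * Real.sin ((b : ℝ) * θ)
      = (Real.cos (((a : ℝ) - b) * θ) - Real.cos (((a : ℝ) + b) * θ)) / 2 := by
    intro θ
    have h1 := Real.cos_sub_cos (((a : ℝ) - b) * θ) (((a : ℝ) + b) * θ)
    have e1 : ((((a : ℝ) - b) * θ + ((a : ℝ) + b) * θ)) / 2 = (a : ℝ) * θ := by ring
    have e2 : ((((a : ℝ) - b) * θ - ((a : ℝ) + b) * θ)) / 2 = -((b : ℝ) * θ) := by ring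
    rw [e1, e2, Real.sin_neg] at h1
    linarith
  have hi1 : IntervalIntegrable (fun θ : ℝ => Real.cos (((a : ℝ) - b) * θ))
      MeasureTheory.volume (-π) π := Continuous.intervalIntegrable (by continuity) _ _
  have hi2 : IntervalIntegrable (fun θ : ℝ => Real.cos (((a : ℝ) + b) * θ))
      MeasureTheory.volume (-π) π := Continuous.intervalIntegrable (by continuity) _ _
  have hsum : ∫ θ in (-π)..π, Real.cos (((a : ℝ) + b) * θ) = 0 := by
    have hcast : ((a : ℝ) + b) = ((a + b : ℤ) : ℝ) := by push_cast; ring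
    rw [hcast]
    exact aux_cos_int_integral _ (by omega)
  simp_rw [hid]
  rw [intervalIntegral.integral_div, intervalIntegral.integral_sub hi1 hi2, hsum]
  by_cases hab : a = b
  · subst hab
    simp only [sub_self, zero_mul, Real.cos_zero, if_pos rfl]
    rw [intervalIntegral.integral_const]
    simp
  · have hcast : ((a : ℝ) - b) = ((a - b : ℤ) : ℝ) := by push_cast; ring
    rw [hcast, aux_cos_int_integral _ (by omega), if_neg hab]
    ring

set_option maxHeartbeats 1000000 in
/-- for every `λ > 0`, `η ∈ ℝ^h`, `η₀ ∈ ℝ`, the set of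
`θ ∈ [−π,π]` where `2λS_w(θ) + η·A(θ) + η₀ = 0` and `η·B(θ) = 0` is finite;
equivalently `r²(θ)` has only finitely many zeros in `[−π,π]`. -/
theorem rsq_zero_set_finite
    (p q : Polynomial ℝ)
    (hq : ∀ z : ℂ, (q.map (algebraMap ℝ ℂ)).eval z = 0 → ‖z‖ < 1)
    (hp : ∀ z : ℂ, ‖z‖ = 1 → (p.map (algebraMap ℝ ℂ)).eval z ≠ 0)
    (Sw : ℝ → ℝ)
    (hSw : ∀ θ : ℝ, Sw θ =
      (‖((p.map (algebraMap ℝ ℂ)).eval (Complex.exp ((θ : ℂ) * Complex.I)) /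
        (q.map (algebraMap ℝ ℂ)).eval (Complex.exp ((θ : ℂ) * Complex.I)))‖) ^ 2)
    (hSwnc : ¬ ∃ cst : ℝ, ∀ θ ∈ Set.Icc (-π) π, Sw θ = cst)
    (h : ℕ) (lam : ℝ) (hlam : 0 < lam) (η : Fin h → ℝ) (η0 : ℝ) :
    Set.Finite {θ ∈ Set.Icc (-π) π |
        2 * lam * Sw θ + dotA h η θ + η0 = 0 ∧ dotB h η θ = 0} ∧
    Set.Finite {θ ∈ Set.Icc (-π) π | rsq Sw lam η η0 θ = 0} := by
    -- Analyticity of the relevant functions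
  have hSwA : AnalyticOnNhd ℝ Sw Set.univ := aux_Sw_analytic p q hq Sw hSw
  have hA : AnalyticOnNhd ℝ (fun θ : ℝ => dotA h η θ) Set.univ := by
    unfold dotA
    exact Finset.analyticOnNhd_fun_sum _ fun k _ => analyticOnNhd_const.mul (aux_cos_analytic _)
  have hBan : AnalyticOnNhd ℝ (fun θ : ℝ => dotB h η θ) Set.univ := by
    unfold dotB
    exact Finset.analyticOnNhd_fun_sum _ fun k _ => analyticOnNhd_const.mul (aux_sin_analytic _)
  have hrsq : AnalyticOnNhd ℝ (fun θ : ℝ => rsq Sw lam η η0 θ) Set.univ := by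
    unfold rsq
    intro x hx
    exact ((((analyticAt_const.mul (hSwA x hx)).add (hA x hx)).add analyticAt_const).pow 2).add
      ((hBan x hx).pow 2)
  have key : Set.Finite {θ ∈ Set.Icc (-π) π | rsq Sw lam η η0 θ = 0} := by
    by_contra hinf
    rw [← Set.Infinite] at hinf
    obtain ⟨x, hxK, hx⟩ := hinf.exists_accPt_of_subset_isCompact isCompact_Icc
      (Set.sep_subset _ _)
    have hfreq : ∃ᶠ z in nhdsWithin x {x}ᶜ, rsq Sw lam η η0 z = 0 := by
      rw [frequently_nhdsWithin_iff]
      rw [accPt_iff_frequently] at hx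
      exact hx.mono fun y hy => ⟨hy.2.2, hy.1⟩
    have hzero := hrsq.eqOn_zero_of_preconnected_of_frequently_eq_zero
      isPreconnected_univ (Set.mem_univ x) hfreq
    have hall : ∀ θ : ℝ, rsq Sw lam η η0 θ = 0 := fun θ => hzero (Set.mem_univ θ)
    have hBzero : ∀ θ : ℝ, dotB h η θ = 0 := by
      intro θ
      have hθ := hall θ
      unfold rsq at hθ
      have h2 : (dotB h η θ) ^ 2 = 0 := by
        nlinarith [sq_nonneg (2 * lam * Sw θ + dotA h η θ + η0), sq_nonneg (dotB h η θ)]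
      exact sq_eq_zero_iff.mp h2
    have hFzero : ∀ θ : ℝ, 2 * lam * Sw θ + dotA h η θ + η0 = 0 := by
      intro θ
      have hθ := hall θ
      unfold rsq at hθ
      have h2 : (2 * lam * Sw θ + dotA h η θ + η0) ^ 2 = 0 := by
        nlinarith [sq_nonneg (2 * lam * Sw θ + dotA h η θ + η0), sq_nonneg (dotB h η θ)]
      exact sq_eq_zero_iff.mp h2
    -- from dotB ≡ 0 deduce η = 0 by Fourier orthogonality
    have hη : ∀ m : Fin h, η m = 0 := by
      intro m
      have hint : (∫ θ in (-π)..π, dotB h η θ * Real.sin (((m.1 + 1 : ℕ) : ℝ) * θ)) = 0 := by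
        simp only [hBzero, zero_mul, intervalIntegral.integral_zero]
      have heq : ∀ θ : ℝ, dotB h η θ * Real.sin (((m.1 + 1 : ℕ) : ℝ) * θ)
          = ∑ k : Fin h, η k *
            (Real.sin (((k.1 + 1 : ℕ) : ℝ) * θ) * Real.sin (((m.1 + 1 : ℕ) : ℝ) * θ)) := by
        intro θ
        unfold dotB
        rw [Finset.sum_mul]
        exact Finset.sum_congr rfl fun k _ => by ring
      have hval : (∫ θ in (-π)..π, dotB h η θ * Real.sin (((m.1 + 1 : ℕ) : ℝ) * θ))
          = π * η m := by
        simp_rw [heq]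
        rw [intervalIntegral.integral_finset_sum (fun k _ =>
          Continuous.intervalIntegrable (by fun_prop) _ _)]
        have hterm : ∀ k : Fin h,
            (∫ θ in (-π)..π, η k *
              (Real.sin (((k.1 + 1 : ℕ) : ℝ) * θ) * Real.sin (((m.1 + 1 : ℕ) : ℝ) * θ)))
            = η k * (if k.1 + 1 = m.1 + 1 then π else 0) := by
          intro k
          rw [intervalIntegral.integral_const_mul,
            aux_sin_orth (k.1 + 1) (m.1 + 1) (by omega) (by omega)]
        simp_rw [hterm]
        rw [Fintype.sum_eq_single m]
        · rw [if_pos rfl]; ring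
        · intro k hk
          rw [if_neg, mul_zero]
          intro hkm
          exact hk (Fin.ext (by omega))
      rw [hval] at hint
      have hπ : π ≠ 0 := ne_of_gt Real.pi_pos
      exact by
        rcases mul_eq_zero.mp hint with h' | h'
        · exact absurd h' hπ
        · exact h'
    -- hence dotA ≡ 0, so Sw is constant, contradiction
    apply hSwnc
    refine ⟨-η0 / (2 * lam), fun θ _ => ?_⟩
    have hA0 : dotA h η θ = 0 := by
      unfold dotA
      simp [hη]
    have hF := hFzero θ
    rw [hA0, add_zero] at hF
    rw [eq_div_iff (by positivity : (2 : ℝ) * lam ≠ 0)]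
    linarith
  constructor
  · refine key.subset ?_
    rintro θ ⟨hθI, h1, h2⟩
    refine ⟨hθI, ?_⟩
    unfold rsq
    rw [h1, h2]
    simp
  · exact key
end
end

section
/- For every fixed integer h ≥ 1, lim_{m→∞} μ_h(m) = μ_h, where μ_h = − sup_{λ > 0, η ∈ ℝ^h, η₀ ∈ ℝ} g(λ, η, η₀); i.e., the discretized dual optimal values converge, as the frequency grid is refined, to the continuous dual optimal value. -/
open MeasureTheory Real Filter

noncomputable section
set_option maxHeartbeats 1000000

/-- Grid points `θ_i = −π + (π/m) i`, `i = 0,…,2m−1`. -/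
def θd (m : ℕ) (i : Fin (2 * m)) : ℝ := -π + (π / (m : ℝ)) * (i.1 : ℝ)

/-- Discretized dual objective. -/
def gdisc (Sw : ℝ → ℝ) (P : ℝ) {h : ℕ} (m : ℕ)
    (lam : ℝ) (η : Fin h → ℝ) (η0 : ℝ) (ν : Fin (2 * m) → ℝ) : ℝ :=
  (1 / (2 * (m : ℝ))) * ∑ i : Fin (2 * m),
    ((1 / 2) * Real.log (2 * lam * Sw (θd m i) - ν i) + lam * Sw (θd m i)
      - rsq Sw lam η η0 (θd m i) / (2 * ν i) - lam * P + η0 + 1 / 2)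

/-- Feasible values of the discretized dual problem; the case `ν_i = 0` with
`r²(θ_i) > 0` (formally value `−∞`) is excluded from the feasible set. -/
def DdiscSet (Sw : ℝ → ℝ) (P : ℝ) (h m : ℕ) : Set ℝ :=
  {y | ∃ (lam : ℝ) (η : Fin h → ℝ) (η0 : ℝ) (ν : Fin (2 * m) → ℝ),
    0 < lam ∧ (∀ i, 0 ≤ ν i ∧ ν i < 2 * lam * Sw (θd m i)) ∧
    (∀ i, ν i = 0 → rsq Sw lam η η0 (θd m i) = 0) ∧
    y = gdisc Sw P m lam η η0 ν}

/-- `μ_h(m)`. -/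
def muDisc (Sw : ℝ → ℝ) (P : ℝ) (h m : ℕ) : ℝ := - sSup (DdiscSet Sw P h m)


/-- abstract ν -/
def nuAux (c r : ℝ) : ℝ := (-r + Real.sqrt (r ^ 2 + 4 * c * r)) / 2

lemma nuAux_nonneg (c r : ℝ) (hc : 0 ≤ c) (hr : 0 ≤ r) : 0 ≤ nuAux c r := by
  have h1 : Real.sqrt (r ^ 2) ≤ Real.sqrt (r ^ 2 + 4 * c * r) := by
    apply Real.sqrt_le_sqrt; nlinarith
  rw [Real.sqrt_sq hr] at h1
  unfold nuAux; linarith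

lemma nuAux_sq (c r : ℝ) (hc : 0 ≤ c) (hr : 0 ≤ r) :
    (nuAux c r) ^ 2 = r * (c - nuAux c r) := by
  have h0 : (0:ℝ) ≤ r ^ 2 + 4 * c * r := by nlinarith
  have h1 : Real.sqrt (r ^ 2 + 4 * c * r) ^ 2 = r ^ 2 + 4 * c * r := Real.sq_sqrt h0
  unfold nuAux
  nlinarith [h1]

lemma nuAux_lt (c r : ℝ) (hc : 0 < c) (hr : 0 ≤ r) : nuAux c r < c := by
  have h0 : (0:ℝ) ≤ r ^ 2 + 4 * c * r := by nlinarith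
  have h2 : Real.sqrt (r ^ 2 + 4 * c * r) < r + 2 * c := by
    have : r ^ 2 + 4 * c * r < (r + 2 * c) ^ 2 := by nlinarith
    have := Real.sqrt_lt_sqrt h0 this
    rwa [Real.sqrt_sq (by nlinarith : (0:ℝ) ≤ r + 2 * c)] at this
  unfold nuAux; linarith

lemma nuAux_eq_zero_iff (c r : ℝ) (hc : 0 < c) (hr : 0 ≤ r) :
    nuAux c r = 0 ↔ r = 0 := by
  constructor
  · intro h
    have := nuAux_sq c r hc.le hr
    rw [h] at this
    have hlt := nuAux_lt c r hc hr
    rw [h] at hlt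
    nlinarith
  · intro h
    unfold nuAux
    rw [h]; simp

lemma nuAux_pos (c r : ℝ) (hc : 0 < c) (hr : 0 < r) : 0 < nuAux c r := by
  rcases lt_or_eq_of_le (nuAux_nonneg c r hc.le hr.le) with h | h
  · exact h
  · exfalso; have := (nuAux_eq_zero_iff c r hc hr.le).1 h.symm; linarith

/-- the division identity -/
lemma nuAux_div (c r : ℝ) (hc : 0 < c) (hr : 0 ≤ r) :
    r / (2 * nuAux c r) = nuAux c r / (2 * (c - nuAux c r)) := by
  rcases eq_or_lt_of_le hr with h | h
  · have h0 : nuAux c r = 0 := (nuAux_eq_zero_iff c r hc hr).2 h.symm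
    rw [h0, ← h]; simp
  · have hν : 0 < nuAux c r := nuAux_pos c r hc h
    have hcc : 0 < c - nuAux c r := by linarith [nuAux_lt c r hc h.le]
    have hsq := nuAux_sq c r hc.le hr
    field_simp
    nlinarith [hsq]

/-- optimality of ν over feasible t -/
lemma nuAux_opt (c r t : ℝ) (hc : 0 < c) (hr : 0 ≤ r)
    (ht0 : 0 ≤ t) (htc : t < c) (hz : t = 0 → r = 0) :
    (1/2) * Real.log (c - t) - r / (2 * t) ≤
      (1/2) * Real.log (c - nuAux c r) - r / (2 * nuAux c r) := by
  rcases eq_or_lt_of_le hr with h | hrpos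
  · -- r = 0
    rw [← h] at *
    simp only [zero_div]
    rw [(nuAux_eq_zero_iff c 0 hc le_rfl).2 rfl]
    simp only [zero_div, sub_zero]
    have : Real.log (c - t) ≤ Real.log c :=
      Real.log_le_log (by linarith) (by linarith)
    linarith
  · have htpos : 0 < t := by
      rcases eq_or_lt_of_le ht0 with h' | h'
      · exfalso; have := hz h'.symm; linarith
      · exact h'
    set ν := nuAux c r with hν
    have hνpos : 0 < ν := nuAux_pos c r hc hrpos
    have hνlt : ν < c := nuAux_lt c r hc hrpos.le
    have hcc : 0 < c - ν := by linarith
    have hct : 0 < c - t := by linarith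
    have hsq : ν ^ 2 = r * (c - ν) := nuAux_sq c r hc.le hrpos.le
    -- log (c-t) - log (c-ν) ≤ (c-t)/(c-ν) - 1
    have hlog : Real.log (c - t) - Real.log (c - ν) ≤ (c - t)/(c - ν) - 1 := by
      have := Real.log_le_sub_one_of_pos (show (0:ℝ) < (c - t)/(c - ν) by positivity)
      rwa [Real.log_div (ne_of_gt hct) (ne_of_gt hcc)] at this
    -- suffices: (1/2)((c-t)/(c-ν) - 1) ≤ r/(2t) - r/(2ν)
    have key : (1/2) * ((c - t)/(c - ν) - 1) ≤ r/(2*t) - r/(2*ν) := by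
      have hr' : r = ν^2 / (c - ν) := by field_simp; nlinarith [hsq]
      have hid : r/(2*t) - r/(2*ν) - (1/2) * ((c - t)/(c - ν) - 1)
          = (ν - t)^2 / (2*t*(c - ν)) := by
        rw [hr']; field_simp; ring
      have hpos : 0 ≤ (ν - t)^2 / (2*t*(c - ν)) := by positivity
      linarith
    nlinarith [hlog, key]

/-- crude upper bound -/
lemma nuAux_ub (c r t : ℝ) (hc : 0 < c) (hr : 0 ≤ r)
    (ht0 : 0 ≤ t) (htc : t < c) (hz : t = 0 → r = 0) :
    (1/2) * Real.log (c - t) - r / (2 * t) ≤ (1/2) * Real.log c - r / (2 * c) := by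
  have h1 : Real.log (c - t) ≤ Real.log c := Real.log_le_log (by linarith) (by linarith)
  have h2 : r / (2 * c) ≤ r / (2 * t) := by
    rcases eq_or_lt_of_le ht0 with h' | h'
    · rw [← h', hz h'.symm]; simp
    · apply div_le_div_of_nonneg_left hr (by positivity) (by linarith)
  linarith


lemma sum_exp_grid (m n : ℕ) (h1 : 1 ≤ n) (h2 : n < 2 * m) :
    ∑ i : Fin (2 * m), Complex.exp ((((n : ℝ) * θd m i : ℝ) : ℂ) * Complex.I) = 0 := by
  have hm : 0 < m := by omega
  have hmR : (0:ℝ) < (m:ℝ) := by exact_mod_cast hm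
  set z : ℂ := Complex.exp ((((n : ℝ) * π / m : ℝ) : ℂ) * Complex.I) with hz
  have hterm : ∀ i : Fin (2 * m),
      Complex.exp ((((n : ℝ) * θd m i : ℝ) : ℂ) * Complex.I)
        = Complex.exp ((((-(n:ℝ) * π : ℝ)) : ℂ) * Complex.I) * z ^ (i.1 : ℕ) := by
    intro i
    rw [hz, ← Complex.exp_nat_mul, ← Complex.exp_add]
    congr 1
    have : ((n : ℝ) * θd m i : ℝ) = (-(n:ℝ) * π : ℝ) + (i.1 : ℕ) * ((n : ℝ) * π / m : ℝ) := by
      unfold θd; field_simp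
    rw [this]
    push_cast
    ring
  rw [Finset.sum_congr rfl (fun i _ => hterm i), ← Finset.mul_sum]
  have hzne : z ≠ 1 := by
    rw [hz, Ne, Complex.exp_eq_one_iff]
    rintro ⟨k, hk⟩
    have hI : (Complex.I : ℂ) ≠ 0 := Complex.I_ne_zero
    have : (((n : ℝ) * π / m : ℝ) : ℂ) = (k : ℂ) * (2 * (π:ℂ)) := by
      field_simp at hk ⊢
      rw [mul_comm] at hk
      push_cast at hk ⊢; linear_combination hk
    have hR : ((n : ℝ) * π / m : ℝ) = (k : ℝ) * (2 * π) := by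
      exact_mod_cast this
    have hpos : 0 < (n : ℝ) * π / m := by positivity
    have hlt : (n : ℝ) * π / m < 2 * π := by
      rw [div_lt_iff₀ hmR]
      have : (n : ℝ) < 2 * m := by exact_mod_cast h2
      nlinarith [Real.pi_pos]
    have hk0 : (0:ℝ) < (k:ℝ) := by nlinarith [Real.pi_pos]
    have hk1 : (k:ℝ) < 1 := by nlinarith [Real.pi_pos]
    have : (0:ℤ) < k := by exact_mod_cast hk0
    have : (k:ℤ) < 1 := by exact_mod_cast hk1
    omega
  have hsum : ∑ i : Fin (2 * m), z ^ (i.1 : ℕ) = 0 := by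
    rw [Fin.sum_univ_eq_sum_range (fun j => z ^ j), geom_sum_eq hzne]
    have hz2m : z ^ (2 * m) = 1 := by
      rw [hz, ← Complex.exp_nat_mul]
      have hmC : (m:ℂ) ≠ 0 := by exact_mod_cast hm.ne'
      have : (2 * m : ℕ) * ((((n : ℝ) * π / m : ℝ) : ℂ) * Complex.I)
          = (n : ℂ) * (2 * (π:ℂ) * Complex.I) := by
        push_cast
        field_simp
      rw [this]
      exact_mod_cast Complex.exp_int_mul_two_pi_mul_I (n : ℤ)
    rw [hz2m]
    simp
  rw [hsum, mul_zero]

lemma sum_cos_grid (m n : ℕ) (h1 : 1 ≤ n) (h2 : n < 2 * m) :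
    ∑ i : Fin (2 * m), Real.cos ((n : ℝ) * θd m i) = 0 := by
  have := sum_exp_grid m n h1 h2
  have hre := congrArg Complex.re this
  rw [Complex.re_sum] at hre
  simp only [Complex.exp_ofReal_mul_I_re] at hre
  simpa using hre

lemma sum_cos_diff_grid (m j k : ℕ) (hj : j < 2 * m) (hk : k < 2 * m) :
    ∑ i : Fin (2 * m), Real.cos ((j : ℝ) * θd m i - (k : ℝ) * θd m i)
      = if j = k then (2 * m : ℝ) else 0 := by
  rcases lt_trichotomy j k with h | h | h
  · rw [if_neg (by omega)]
    have heq : ∀ i : Fin (2 * m),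
        Real.cos ((j : ℝ) * θd m i - (k : ℝ) * θd m i)
          = Real.cos (((k - j : ℕ) : ℝ) * θd m i) := by
      intro i
      rw [← Real.cos_neg]
      congr 1
      have : ((k - j : ℕ) : ℝ) = (k : ℝ) - j := by
        have : j ≤ k := by omega
        exact Nat.cast_sub this
      rw [this]; ring
    rw [Finset.sum_congr rfl (fun i _ => heq i)]
    exact sum_cos_grid m (k - j) (by omega) (by omega)
  · rw [if_pos h, h]
    have heq : ∀ i : Fin (2 * m),
        Real.cos ((k : ℝ) * θd m i - (k : ℝ) * θd m i) = 1 := by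
      intro i; rw [sub_self, Real.cos_zero]
    rw [Finset.sum_congr rfl (fun i _ => heq i)]
    simp [Finset.card_univ]
  · rw [if_neg (by omega)]
    have heq : ∀ i : Fin (2 * m),
        Real.cos ((j : ℝ) * θd m i - (k : ℝ) * θd m i)
          = Real.cos (((j - k : ℕ) : ℝ) * θd m i) := by
      intro i
      congr 1
      have : ((j - k : ℕ) : ℝ) = (j : ℝ) - k := by
        have : k ≤ j := by omega
        exact Nat.cast_sub this
      rw [this]; ring
    rw [Finset.sum_congr rfl (fun i _ => heq i)]
    exact sum_cos_grid m (j - k) (by omega) (by omega)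

lemma sum_dotA_grid (h m : ℕ) (hm : h < 2 * m) (η : Fin h → ℝ) :
    ∑ i : Fin (2 * m), dotA h η (θd m i) = 0 := by
  unfold dotA
  rw [Finset.sum_comm]
  apply Finset.sum_eq_zero
  intro k _
  rw [← Finset.mul_sum, sum_cos_grid m (k.1 + 1) (by omega) (by omega), mul_zero]

lemma sum_quad_grid (h m : ℕ) (hm : h < 2 * m) (η : Fin h → ℝ) (η0 : ℝ) :
    ∑ i : Fin (2 * m), ((dotA h η (θd m i) + η0) ^ 2 + (dotB h η (θd m i)) ^ 2)
      = 2 * (m : ℝ) * (η0 ^ 2 + ∑ k, (η k) ^ 2) := by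
  have key : ∀ θ : ℝ, (dotA h η θ + η0) ^ 2 + (dotB h η θ) ^ 2
      = (∑ j, ∑ k, η j * η k *
          Real.cos (((j.1 + 1 : ℕ) : ℝ) * θ - ((k.1 + 1 : ℕ) : ℝ) * θ))
        + 2 * η0 * dotA h η θ + η0 ^ 2 := by
    intro θ
    have hab : (dotA h η θ) ^ 2 + (dotB h η θ) ^ 2
        = ∑ j, ∑ k, η j * η k *
            Real.cos (((j.1 + 1 : ℕ) : ℝ) * θ - ((k.1 + 1 : ℕ) : ℝ) * θ) := by
      unfold dotA dotB
      rw [sq, sq, Finset.sum_mul_sum, Finset.sum_mul_sum, ← Finset.sum_add_distrib]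
      apply Finset.sum_congr rfl
      intro j _
      rw [← Finset.sum_add_distrib]
      apply Finset.sum_congr rfl
      intro k _
      rw [Real.cos_sub]
      ring
    nlinarith [hab]
  rw [Finset.sum_congr rfl (fun i _ => key (θd m i))]
  rw [Finset.sum_add_distrib, Finset.sum_add_distrib]
  have h1 : ∑ i : Fin (2 * m), (∑ j, ∑ k, η j * η k *
      Real.cos (((j.1 + 1 : ℕ) : ℝ) * θd m i - ((k.1 + 1 : ℕ) : ℝ) * θd m i))
      = 2 * (m : ℝ) * ∑ k, (η k) ^ 2 := by
    rw [Finset.sum_comm]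
    have : ∀ j : Fin h, (∑ i : Fin (2 * m), ∑ k, η j * η k *
        Real.cos (((j.1 + 1 : ℕ) : ℝ) * θd m i - ((k.1 + 1 : ℕ) : ℝ) * θd m i))
        = 2 * (m : ℝ) * (η j) ^ 2 := by
      intro j
      rw [Finset.sum_comm]
      have hjk : ∀ k : Fin h, (∑ i : Fin (2 * m), η j * η k *
          Real.cos (((j.1 + 1 : ℕ) : ℝ) * θd m i - ((k.1 + 1 : ℕ) : ℝ) * θd m i))
          = if j = k then 2 * (m : ℝ) * (η j) ^ 2 else 0 := by
        intro k
        rw [← Finset.mul_sum, sum_cos_diff_grid m (j.1 + 1) (k.1 + 1) (by omega) (by omega)]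
        by_cases hjk : j = k
        · rw [if_pos (by omega), if_pos hjk, hjk]; push_cast; ring
        · rw [if_neg (show ¬(j.1+1 = k.1+1) by intro hcon; exact hjk (Fin.ext (by omega))), if_neg hjk, mul_zero]
      rw [Finset.sum_congr rfl (fun k _ => hjk k), Finset.sum_ite_eq Finset.univ j
        (fun _ => 2 * (m : ℝ) * (η j) ^ 2)]
      simp
    rw [Finset.sum_congr rfl (fun j _ => this j), ← Finset.mul_sum]
  have h2 : ∑ i : Fin (2 * m), 2 * η0 * dotA h η (θd m i) = 0 := by
    rw [← Finset.mul_sum, sum_dotA_grid h m hm η, mul_zero]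
  have h3 : ∑ _i : Fin (2 * m), η0 ^ 2 = 2 * (m : ℝ) * η0 ^ 2 := by
    rw [Finset.sum_const, Finset.card_univ, Fintype.card_fin]
    push_cast; ring
  rw [h1, h2, h3]; ring

lemma integral_cos_nat (n : ℕ) (h1 : 1 ≤ n) :
    ∫ θ in (-π)..π, Real.cos ((n : ℝ) * θ) = 0 := by
  have hn : ((n : ℝ)) ≠ 0 := by positivity
  rw [intervalIntegral.integral_comp_mul_left Real.cos hn, _root_.integral_cos]
  have hs : Real.sin ((n:ℝ) * π) = 0 := Real.sin_nat_mul_pi n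
  have hs' : Real.sin ((n:ℝ) * -π) = 0 := by
    rw [mul_neg, Real.sin_neg, hs, neg_zero]
  rw [hs, hs', sub_zero, smul_zero]

lemma integral_dotA (h : ℕ) (η : Fin h → ℝ) :
    ∫ θ in (-π)..π, dotA h η θ = 0 := by
  unfold dotA
  rw [intervalIntegral.integral_finset_sum]
  · apply Finset.sum_eq_zero
    intro k _
    rw [intervalIntegral.integral_const_mul, integral_cos_nat (k.1 + 1) (by omega), mul_zero]
  · intro k _
    apply Continuous.intervalIntegrable
    continuity

/-- continuous version of the integrand -/
def Phi (Sw : ℝ → ℝ) {h : ℕ} (lam : ℝ) (η : Fin h → ℝ) (η0 θ : ℝ) : ℝ :=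
  (1/2) * Real.log (2*lam*Sw θ - nuf Sw lam η η0 θ)
    - nuf Sw lam η η0 θ / (2 * (2*lam*Sw θ - nuf Sw lam η η0 θ)) + lam * Sw θ

section SwFacts

variable (Sw : ℝ → ℝ) {h : ℕ} (lam : ℝ) (η : Fin h → ℝ) (η0 θ : ℝ)

lemma nuf_eq_nuAux : nuf Sw lam η η0 θ = nuAux (2*lam*Sw θ) (rsq Sw lam η η0 θ) := by
  unfold nuf nuAux
  have : (rsq Sw lam η η0 θ) ^ 2 + 8 * lam * Sw θ * rsq Sw lam η η0 θ
      = (rsq Sw lam η η0 θ) ^ 2 + 4 * (2*lam*Sw θ) * rsq Sw lam η η0 θ := by ring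
  rw [this]

lemma rsq_nonneg : 0 ≤ rsq Sw lam η η0 θ := by unfold rsq; positivity

lemma nuf_nonneg (hl : 0 < lam) (hS : 0 < Sw θ) : 0 ≤ nuf Sw lam η η0 θ := by
  rw [nuf_eq_nuAux]
  exact nuAux_nonneg _ _ (by positivity) (rsq_nonneg Sw lam η η0 θ)

lemma nuf_lt (hl : 0 < lam) (hS : 0 < Sw θ) : nuf Sw lam η η0 θ < 2*lam*Sw θ := by
  rw [nuf_eq_nuAux]
  exact nuAux_lt _ _ (by positivity) (rsq_nonneg Sw lam η η0 θ)

lemma nuf_zero (hl : 0 < lam) (hS : 0 < Sw θ) (hz : nuf Sw lam η η0 θ = 0) :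
    rsq Sw lam η η0 θ = 0 := by
  rw [nuf_eq_nuAux] at hz
  exact (nuAux_eq_zero_iff _ _ (by positivity) (rsq_nonneg Sw lam η η0 θ)).1 hz

lemma integrand_eq_Phi (hl : 0 < lam) (hS : 0 < Sw θ) :
    (1/2) * Real.log (2*lam*Sw θ - nuf Sw lam η η0 θ)
      - rsq Sw lam η η0 θ / (2 * nuf Sw lam η η0 θ) + lam * Sw θ
    = Phi Sw lam η η0 θ := by
  unfold Phi
  rw [nuf_eq_nuAux, nuAux_div _ _ (by positivity) (rsq_nonneg Sw lam η η0 θ)]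

/-- pointwise upper bound on the discrete/continuous integrand term -/
lemma pointwise_ub (M : ℝ) (hl : 0 < lam) (hS : 0 < Sw θ) (hSM : Sw θ ≤ M) (t : ℝ)
    (ht0 : 0 ≤ t) (htc : t < 2*lam*Sw θ) (htz : t = 0 → rsq Sw lam η η0 θ = 0) :
    (1/2) * Real.log (2*lam*Sw θ - t) + lam * Sw θ - rsq Sw lam η η0 θ / (2 * t)
      ≤ (1/2) * Real.log (2*lam*M) - dotA h η θ - η0
        - ((dotA h η θ + η0)^2 + (dotB h η θ)^2) / (4*lam*M) := by
  have hMpos : 0 < M := lt_of_lt_of_le hS hSM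
  set c := 2*lam*Sw θ with hc
  set r := rsq Sw lam η η0 θ with hr
  set a := dotA h η θ with ha
  set b := dotB h η θ with hb
  have hcpos : 0 < c := by rw [hc]; positivity
  have h1 : (1/2) * Real.log (c - t) - r / (2*t) ≤ (1/2) * Real.log c - r / (2*c) :=
    nuAux_ub c r t hcpos (rsq_nonneg Sw lam η η0 θ) ht0 htc htz
  have h2 : Real.log c ≤ Real.log (2*lam*M) := by
    apply Real.log_le_log hcpos
    rw [hc]; nlinarith
  have hq : 0 ≤ (a + η0)^2 + b^2 := by positivity
  have hexp : lam * Sw θ - r / (2*c) = -a - η0 - ((a + η0)^2 + b^2) / (2*c) := by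
    rw [hr, hc]
    unfold rsq
    rw [← ha, ← hb]
    field_simp
    ring
  have h3 : ((a + η0)^2 + b^2) / (4*lam*M) ≤ ((a + η0)^2 + b^2) / (2*c) := by
    apply div_le_div_of_nonneg_left hq (by rw [hc]; positivity) (by rw [hc]; nlinarith)
  linarith

end SwFacts

section Cont

variable (Sw : ℝ → ℝ) {h : ℕ}

lemma cont_joint (hSwc : Continuous Sw) (hSwpos : ∀ θ, 0 < Sw θ) :
    ContinuousOn (fun p : (ℝ × (Fin h → ℝ) × ℝ) × ℝ => Phi Sw p.1.1 p.1.2.1 p.1.2.2 p.2)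
      {p : (ℝ × (Fin h → ℝ) × ℝ) × ℝ | 0 < p.1.1} := by
  have hA : Continuous (fun p : (ℝ × (Fin h → ℝ) × ℝ) × ℝ => dotA h p.1.2.1 p.2) := by
    unfold dotA
    apply continuous_finset_sum
    intro k _
    exact ((continuous_apply k).comp
      ((continuous_fst.comp continuous_snd).comp continuous_fst)).mul
      (Real.continuous_cos.comp (continuous_const.mul continuous_snd))
  have hB : Continuous (fun p : (ℝ × (Fin h → ℝ) × ℝ) × ℝ => dotB h p.1.2.1 p.2) := by
    unfold dotB
    apply continuous_finset_sum
    intro k _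
    exact ((continuous_apply k).comp
      ((continuous_fst.comp continuous_snd).comp continuous_fst)).mul
      (Real.continuous_sin.comp (continuous_const.mul continuous_snd))
  have hlamc : Continuous (fun p : (ℝ × (Fin h → ℝ) × ℝ) × ℝ => p.1.1) :=
    continuous_fst.comp continuous_fst
  have heta0 : Continuous (fun p : (ℝ × (Fin h → ℝ) × ℝ) × ℝ => p.1.2.2) :=
    (continuous_snd.comp continuous_snd).comp continuous_fst
  have hSwp : Continuous (fun p : (ℝ × (Fin h → ℝ) × ℝ) × ℝ => Sw p.2) :=
    hSwc.comp continuous_snd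
  have hr : Continuous (fun p : (ℝ × (Fin h → ℝ) × ℝ) × ℝ =>
      rsq Sw p.1.1 p.1.2.1 p.1.2.2 p.2) := by
    unfold rsq
    exact ((((continuous_const.mul hlamc).mul hSwp).add hA).add heta0).pow 2 |>.add (hB.pow 2)
  have hnu : Continuous (fun p : (ℝ × (Fin h → ℝ) × ℝ) × ℝ =>
      nuf Sw p.1.1 p.1.2.1 p.1.2.2 p.2) := by
    unfold nuf
    apply Continuous.div_const
    apply Continuous.add hr.neg
    apply Real.continuous_sqrt.comp
    exact (hr.pow 2).add (((continuous_const.mul hlamc).mul hSwp).mul hr)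
  have hD : Continuous (fun p : (ℝ × (Fin h → ℝ) × ℝ) × ℝ =>
      2 * p.1.1 * Sw p.2 - nuf Sw p.1.1 p.1.2.1 p.1.2.2 p.2) :=
    ((continuous_const.mul hlamc).mul hSwp).sub hnu
  have hDpos : ∀ p ∈ {p : (ℝ × (Fin h → ℝ) × ℝ) × ℝ | 0 < p.1.1},
      0 < 2 * p.1.1 * Sw p.2 - nuf Sw p.1.1 p.1.2.1 p.1.2.2 p.2 := by
    intro p hp
    have := nuf_lt Sw p.1.1 p.1.2.1 p.1.2.2 p.2 hp (hSwpos p.2)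
    linarith
  unfold Phi
  apply ContinuousOn.add
  · apply ContinuousOn.sub
    · apply ContinuousOn.mul continuousOn_const
      apply ContinuousOn.log hD.continuousOn
      intro p hp
      exact ne_of_gt (hDpos p hp)
    · apply ContinuousOn.div hnu.continuousOn (continuous_const.mul hD).continuousOn
      intro p hp
      have := hDpos p hp
      exact (mul_pos two_pos this).ne'
  · exact (hlamc.mul hSwp).continuousOn

lemma cont_Phi_fixed (hSwc : Continuous Sw) (hSwpos : ∀ θ, 0 < Sw θ)
    (lam : ℝ) (η : Fin h → ℝ) (η0 : ℝ) (hl : 0 < lam) :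
    Continuous (fun θ => Phi Sw lam η η0 θ) := by
  have := (cont_joint Sw hSwc hSwpos).comp_continuous
    (f := fun θ : ℝ => (((lam, η, η0) : ℝ × (Fin h → ℝ) × ℝ), θ))
    (continuous_const.prodMk continuous_id) (fun θ => by exact hl)
  exact this

end Cont

lemma riemann_est (F : ℝ → ℝ) (m : ℕ) (hm : 1 ≤ m)
    (hFc : ContinuousOn F (Set.Icc (-π) π)) (ω : ℝ) (hω0 : 0 ≤ ω)
    (hmod : ∀ u v, u ∈ Set.Icc (-π) π → v ∈ Set.Icc (-π) π → |u - v| ≤ π/(m:ℝ) →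
      |F u - F v| ≤ ω) :
    |(1/(2*(m:ℝ))) * ∑ i : Fin (2*m), F (θd m i)
      - (1/(2*π)) * ∫ θ in (-π)..π, F θ| ≤ ω := by
  have hπ := Real.pi_pos
  have hmR : (0:ℝ) < (m:ℝ) := by exact_mod_cast hm
  obtain ⟨τ, hτdef⟩ : ∃ τ : ℕ → ℝ, ∀ i : ℕ, τ i = -π + (π/(m:ℝ)) * i :=
    ⟨fun i => -π + (π/(m:ℝ)) * i, fun i => rfl⟩
  have hstep : ∀ i : ℕ, τ (i+1) - τ i = π/(m:ℝ) := by
    intro i; rw [hτdef, hτdef]; push_cast; ring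
  have hle : ∀ i : ℕ, τ i ≤ τ (i+1) := by
    intro i
    have h1 := hstep i
    have h2 : (0:ℝ) < π/(m:ℝ) := by positivity
    linarith
  have hτmem : ∀ i : ℕ, i ≤ 2*m → τ i ∈ Set.Icc (-π) π := by
    intro i hi
    constructor
    · have : (0:ℝ) ≤ (π/(m:ℝ)) * i := by positivity
      rw [hτdef]; linarith
    · rw [hτdef]
      have hiR : (i:ℝ) ≤ 2*(m:ℝ) := by exact_mod_cast hi
      have : (π/(m:ℝ)) * i ≤ (π/(m:ℝ)) * (2*m) := by
        apply mul_le_mul_of_nonneg_left hiR (by positivity)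
      have h2 : (π/(m:ℝ)) * (2*m) = 2*π := by field_simp
      linarith
  have hsub : ∀ i : ℕ, i < 2*m → Set.uIcc (τ i) (τ (i+1)) ⊆ Set.Icc (-π) π := by
    intro i hi
    rw [Set.uIcc_of_le (hle i)]
    exact Set.Icc_subset_Icc (hτmem i (by omega)).1 (hτmem (i+1) (by omega)).2
  have hint : ∀ i < 2*m, IntervalIntegrable F MeasureTheory.volume (τ i) (τ (i+1)) :=
    fun i hi => (hFc.mono (hsub i hi)).intervalIntegrable
  have hsplit := intervalIntegral.sum_integral_adjacent_intervals hint
  have hτ0 : τ 0 = -π := by rw [hτdef]; simp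
  have hτN : τ (2*m) = π := by
    rw [hτdef]; push_cast; field_simp; ring
  rw [hτ0, hτN] at hsplit
  have hper : ∀ i, i < 2*m → |(π/(m:ℝ)) * F (τ i) - ∫ t in τ i..τ (i+1), F t|
      ≤ (π/(m:ℝ)) * ω := by
    intro i hi
    have heq : (π/(m:ℝ)) * F (τ i) - (∫ t in τ i..τ (i+1), F t)
        = ∫ t in τ i..τ (i+1), (F (τ i) - F t) := by
      rw [intervalIntegral.integral_sub intervalIntegrable_const (hint i hi),
        intervalIntegral.integral_const, hstep i, smul_eq_mul]
    rw [heq]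
    have hbnd : ∀ x ∈ Set.uIoc (τ i) (τ (i+1)), ‖F (τ i) - F x‖ ≤ ω := by
      intro x hx
      rw [Set.uIoc_of_le (hle i)] at hx
      have hxIcc : x ∈ Set.Icc (-π) π := by
        apply hsub i hi
        rw [Set.uIcc_of_le (hle i)]
        exact ⟨le_of_lt hx.1, hx.2⟩
      have hτi : τ i ∈ Set.Icc (-π) π := hτmem i (by omega)
      have hdist : |τ i - x| ≤ π/(m:ℝ) := by
        rw [abs_sub_comm, abs_of_nonneg (by linarith [hx.1])]
        have h1 := hstep i
        linarith [hx.2]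
      exact hmod (τ i) x hτi hxIcc hdist
    have := intervalIntegral.norm_integral_le_of_norm_le_const hbnd
    rw [Real.norm_eq_abs] at this
    calc |∫ t in τ i..τ (i+1), (F (τ i) - F t)| ≤ ω * |τ (i+1) - τ i| := this
      _ = (π/(m:ℝ)) * ω := by rw [hstep i, abs_of_pos (by positivity)]; ring
  have hfin : ∑ i : Fin (2*m), F (θd m i) = ∑ i ∈ Finset.range (2*m), F (τ i) := by
    rw [← Fin.sum_univ_eq_sum_range (fun i => F (τ i)) (2*m)]
    apply Finset.sum_congr rfl
    intro i _
    rw [hτdef]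
    rfl
  have hkey : (1/(2*(m:ℝ))) * ∑ i : Fin (2*m), F (θd m i)
      - (1/(2*π)) * ∫ θ in (-π)..π, F θ
      = (1/(2*π)) * ∑ i ∈ Finset.range (2*m),
          ((π/(m:ℝ)) * F (τ i) - ∫ t in τ i..τ (i+1), F t) := by
    rw [hfin, Finset.sum_sub_distrib, hsplit, ← Finset.mul_sum]
    rw [mul_sub, ← mul_assoc]
    have : (1/(2*π)) * (π/(m:ℝ)) = 1/(2*(m:ℝ)) := by field_simp
    rw [this]
  rw [hkey, abs_mul, abs_of_pos (show (0:ℝ) < 1/(2*π) by positivity)]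
  calc (1/(2*π)) * |∑ i ∈ Finset.range (2*m),
        ((π/(m:ℝ)) * F (τ i) - ∫ t in τ i..τ (i+1), F t)|
      ≤ (1/(2*π)) * ∑ i ∈ Finset.range (2*m), ((π/(m:ℝ)) * ω) := by
        apply mul_le_mul_of_nonneg_left _ (by positivity)
        calc |∑ i ∈ Finset.range (2*m), ((π/(m:ℝ)) * F (τ i) - ∫ t in τ i..τ (i+1), F t)|
            ≤ ∑ i ∈ Finset.range (2*m),
              |(π/(m:ℝ)) * F (τ i) - ∫ t in τ i..τ (i+1), F t| :=
              Finset.abs_sum_le_sum_abs _ _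
          _ ≤ ∑ i ∈ Finset.range (2*m), ((π/(m:ℝ)) * ω) :=
              Finset.sum_le_sum (fun i hi => hper i (Finset.mem_range.1 hi))
    _ = ω := by
        rw [Finset.sum_const, Finset.card_range, nsmul_eq_mul]
        push_cast; field_simp

lemma θd_mem (m : ℕ) (hm : 1 ≤ m) (i : Fin (2*m)) : θd m i ∈ Set.Icc (-π) π := by
  have hπ := Real.pi_pos
  have hmR : (0:ℝ) < (m:ℝ) := by exact_mod_cast hm
  unfold θd
  constructor
  · have : (0:ℝ) ≤ (π/(m:ℝ)) * i.1 := by positivity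
    linarith
  · have hiR : (i.1:ℝ) ≤ 2*(m:ℝ) := by
      have := i.2; push_cast; exact_mod_cast Nat.le_of_lt this
    have h1 : (π/(m:ℝ)) * i.1 ≤ (π/(m:ℝ)) * (2*m) :=
      mul_le_mul_of_nonneg_left hiR (by positivity)
    have h2 : (π/(m:ℝ)) * (2*(m:ℝ)) = 2*π := by field_simp
    linarith

lemma cont_dotA (h : ℕ) (η : Fin h → ℝ) : Continuous (fun θ => dotA h η θ) := by
  unfold dotA
  apply continuous_finset_sum
  intro k _
  exact continuous_const.mul (Real.continuous_cos.comp (continuous_const.mul continuous_id))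

section Helpers

variable (Sw : ℝ → ℝ) (P : ℝ) {h : ℕ}

/-- H1: any feasible ν is dominated by the optimal ν* -/
lemma gdisc_le_Rsum (hSwpos : ∀ θ, 0 < Sw θ) (m : ℕ) (lam : ℝ) (η : Fin h → ℝ) (η0 : ℝ) (ν : Fin (2*m) → ℝ)
    (hl : 0 < lam)
    (hfeas : ∀ i, 0 ≤ ν i ∧ ν i < 2 * lam * Sw (θd m i))
    (hz : ∀ i, ν i = 0 → rsq Sw lam η η0 (θd m i) = 0) :
    gdisc Sw P m lam η η0 ν
      ≤ gdisc Sw P m lam η η0 (fun i => nuf Sw lam η η0 (θd m i)) := by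
  unfold gdisc
  dsimp only
  apply mul_le_mul_of_nonneg_left _ (by positivity)
  apply Finset.sum_le_sum
  intro i _
  have hS := hSwpos (θd m i)
  have hopt := nuAux_opt (2*lam*Sw (θd m i)) (rsq Sw lam η η0 (θd m i)) (ν i)
    (by positivity) (rsq_nonneg Sw lam η η0 (θd m i)) (hfeas i).1 (hfeas i).2 (hz i)
  rw [← nuf_eq_nuAux] at hopt
  linarith

/-- H2 -/
lemma Rsum_eq_phi_sum (hSwpos : ∀ θ, 0 < Sw θ) (m : ℕ) (hm : 1 ≤ m) (lam : ℝ) (η : Fin h → ℝ) (η0 : ℝ)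
    (hl : 0 < lam) :
    gdisc Sw P m lam η η0 (fun i => nuf Sw lam η η0 (θd m i))
      = (1/(2*(m:ℝ))) * (∑ i : Fin (2*m), Phi Sw lam η η0 (θd m i))
        - lam * P + η0 + 1/2 := by
  have hmR : (0:ℝ) < (m:ℝ) := by exact_mod_cast hm
  unfold gdisc
  dsimp only
  have hterm : ∀ i : Fin (2*m),
      (1/2) * Real.log (2 * lam * Sw (θd m i) - nuf Sw lam η η0 (θd m i))
        + lam * Sw (θd m i)
        - rsq Sw lam η η0 (θd m i) / (2 * nuf Sw lam η η0 (θd m i))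
        - lam * P + η0 + 1/2
      = Phi Sw lam η η0 (θd m i) + (- lam * P + η0 + 1/2) := by
    intro i
    have := integrand_eq_Phi Sw lam η η0 (θd m i) hl (hSwpos (θd m i))
    linarith
  rw [Finset.sum_congr rfl (fun i _ => hterm i), Finset.sum_add_distrib,
    Finset.sum_const, Finset.card_univ, Fintype.card_fin, nsmul_eq_mul]
  push_cast
  field_simp
  ring

/-- H3 -/
lemma Rsum_mem (hSwpos : ∀ θ, 0 < Sw θ) (m : ℕ) (lam : ℝ) (η : Fin h → ℝ) (η0 : ℝ) (hl : 0 < lam) :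
    gdisc Sw P m lam η η0 (fun i => nuf Sw lam η η0 (θd m i))
      ∈ DdiscSet Sw P h m := by
  refine ⟨lam, η, η0, fun i => nuf Sw lam η η0 (θd m i), hl, ?_, ?_, rfl⟩
  · intro i
    exact ⟨nuf_nonneg Sw lam η η0 (θd m i) hl (hSwpos (θd m i)),
      nuf_lt Sw lam η η0 (θd m i) hl (hSwpos (θd m i))⟩
  · intro i hi
    exact nuf_zero Sw lam η η0 (θd m i) hl (hSwpos (θd m i)) hi

/-- H4: coercive bound on all feasible discrete values, m > h -/
lemma elem_le_B (hSwpos : ∀ θ, 0 < Sw θ) (M : ℝ) (hM : ∀ θ ∈ Set.Icc (-π) π, Sw θ ≤ M)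
    (m : ℕ) (hm : 1 ≤ m) (hmh : h < 2*m)
    (lam : ℝ) (η : Fin h → ℝ) (η0 : ℝ) (ν : Fin (2*m) → ℝ) (hl : 0 < lam)
    (hfeas : ∀ i, 0 ≤ ν i ∧ ν i < 2 * lam * Sw (θd m i))
    (hz : ∀ i, ν i = 0 → rsq Sw lam η η0 (θd m i) = 0) :
    gdisc Sw P m lam η η0 ν
      ≤ (1/2) * Real.log (2*lam*M) - lam * P + 1/2
        - (η0^2 + ∑ k, (η k)^2) / (4*lam*M) := by
  have hmR : (0:ℝ) < (m:ℝ) := by exact_mod_cast hm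
  have hMpos : 0 < M := lt_of_lt_of_le (hSwpos 0)
    (hM 0 ⟨by linarith [Real.pi_pos], by linarith [Real.pi_pos]⟩)
  unfold gdisc
  have hptw : ∀ i : Fin (2*m),
      (1/2) * Real.log (2 * lam * Sw (θd m i) - ν i) + lam * Sw (θd m i)
        - rsq Sw lam η η0 (θd m i) / (2 * ν i) - lam * P + η0 + 1/2
      ≤ ((1/2) * Real.log (2*lam*M) - lam * P + 1/2)
          - dotA h η (θd m i)
          - ((dotA h η (θd m i) + η0)^2 + (dotB h η (θd m i))^2) / (4*lam*M) := by
    intro i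
    have := pointwise_ub Sw lam η η0 (θd m i) M hl (hSwpos (θd m i))
      (hM (θd m i) (θd_mem m hm i)) (ν i) (hfeas i).1 (hfeas i).2 (hz i)
    linarith
  calc (1/(2*(m:ℝ))) * ∑ i : Fin (2*m),
        ((1/2) * Real.log (2 * lam * Sw (θd m i) - ν i) + lam * Sw (θd m i)
          - rsq Sw lam η η0 (θd m i) / (2 * ν i) - lam * P + η0 + 1/2)
      ≤ (1/(2*(m:ℝ))) * ∑ i : Fin (2*m),
        (((1/2) * Real.log (2*lam*M) - lam * P + 1/2)
          - dotA h η (θd m i)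
          - ((dotA h η (θd m i) + η0)^2 + (dotB h η (θd m i))^2) / (4*lam*M)) := by
        apply mul_le_mul_of_nonneg_left _ (by positivity)
        exact Finset.sum_le_sum (fun i _ => hptw i)
    _ = (1/2) * Real.log (2*lam*M) - lam * P + 1/2
        - (η0^2 + ∑ k, (η k)^2) / (4*lam*M) := by
        rw [Finset.sum_sub_distrib, Finset.sum_sub_distrib,
          sum_dotA_grid h m hmh η, Finset.sum_const, Finset.card_univ, Fintype.card_fin,
          nsmul_eq_mul]
        rw [← Finset.sum_div, sum_quad_grid h m hmh η η0]
        push_cast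
        field_simp
        ring

/-- H6 -/
lemma gdual_eq_phi_int (hSwpos : ∀ θ, 0 < Sw θ) (lam : ℝ) (η : Fin h → ℝ) (η0 : ℝ) (hl : 0 < lam) :
    gdual Sw P lam η η0
      = (1/(2*π)) * (∫ θ in (-π)..π, Phi Sw lam η η0 θ) - lam * P + η0 + 1/2 := by
  unfold gdual
  have hcg : (∫ θ in (-π)..π,
      ((1 / 2) * Real.log (2 * lam * Sw θ - nuf Sw lam η η0 θ)
        - rsq Sw lam η η0 θ / (2 * nuf Sw lam η η0 θ) + lam * Sw θ))
      = ∫ θ in (-π)..π, Phi Sw lam η η0 θ := by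
    apply intervalIntegral.integral_congr
    intro θ _
    exact integrand_eq_Phi Sw lam η η0 θ hl (hSwpos θ)
  rw [hcg]

/-- pointwise bound for Phi on Icc -/
lemma Phi_le (hSwpos : ∀ θ, 0 < Sw θ) (M : ℝ) (hM : ∀ θ ∈ Set.Icc (-π) π, Sw θ ≤ M)
    (lam : ℝ) (η : Fin h → ℝ) (η0 : ℝ) (hl : 0 < lam)
    (θ : ℝ) (hθ : θ ∈ Set.Icc (-π) π) :
    Phi Sw lam η η0 θ ≤ (1/2) * Real.log (2*lam*M) - dotA h η θ - η0 := by
  have hS := hSwpos θ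
  have hMpos : 0 < M := lt_of_lt_of_le hS (hM θ hθ)
  have hq : 0 ≤ ((dotA h η θ + η0)^2 + (dotB h η θ)^2) / (4*lam*M) := by positivity
  have heq := integrand_eq_Phi Sw lam η η0 θ hl hS
  have hub := pointwise_ub Sw lam η η0 θ M hl hS (hM θ hθ) (nuf Sw lam η η0 θ)
    (nuf_nonneg Sw lam η η0 θ hl hS) (nuf_lt Sw lam η η0 θ hl hS)
    (nuf_zero Sw lam η η0 θ hl hS)
  linarith

/-- H7: global bound on gdual -/
lemma gdual_le_Cstar (hSwpos : ∀ θ, 0 < Sw θ) (hSwc : Continuous Sw) (M : ℝ)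
    (hM : ∀ θ ∈ Set.Icc (-π) π, Sw θ ≤ M) (hP : 0 < P)
    (lam : ℝ) (η : Fin h → ℝ) (η0 : ℝ) (hl : 0 < lam) :
    gdual Sw P lam η η0 ≤ (1/2) * Real.log (2*M/P) := by
  have hπ := Real.pi_pos
  have hMpos : 0 < M := lt_of_lt_of_le (hSwpos 0)
    (hM 0 ⟨by linarith, by linarith⟩)
  rw [gdual_eq_phi_int Sw P hSwpos lam η η0 hl]
  have hPhiCont := cont_Phi_fixed Sw hSwc hSwpos lam η η0 hl
  have hmaj : Continuous (fun θ => (1/2) * Real.log (2*lam*M) - dotA h η θ - η0) := by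
    apply Continuous.sub (Continuous.sub continuous_const (cont_dotA h η)) continuous_const
  have hmono : (∫ θ in (-π)..π, Phi Sw lam η η0 θ)
      ≤ ∫ θ in (-π)..π, ((1/2) * Real.log (2*lam*M) - dotA h η θ - η0) := by
    apply intervalIntegral.integral_mono_on (by linarith)
      (hPhiCont.intervalIntegrable _ _) (hmaj.intervalIntegrable _ _)
    intro θ hθ
    exact Phi_le Sw hSwpos M hM lam η η0 hl θ hθ
  have hmajval : (∫ θ in (-π)..π, ((1/2) * Real.log (2*lam*M) - dotA h η θ - η0))
      = 2*π*((1/2) * Real.log (2*lam*M) - η0) := by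
    have h1 : (∫ θ in (-π)..π, ((1/2) * Real.log (2*lam*M) - dotA h η θ - η0))
        = (∫ θ in (-π)..π, ((1/2) * Real.log (2*lam*M) - η0))
          - ∫ θ in (-π)..π, dotA h η θ := by
      rw [← intervalIntegral.integral_sub
        (Continuous.intervalIntegrable (by continuity) _ _)
        ((cont_dotA h η).intervalIntegrable _ _)]
      apply intervalIntegral.integral_congr
      intro θ _
      ring
    rw [h1, integral_dotA, intervalIntegral.integral_const, sub_zero, smul_eq_mul]
    ring
  have hlogle : (1/2) * Real.log (2*lam*M) - lam * P + 1/2 ≤ (1/2) * Real.log (2*M/P) := by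
    have hlp : 0 < lam * P := by positivity
    have h2 : Real.log (lam*P) ≤ lam*P - 1 := Real.log_le_sub_one_of_pos hlp
    have h3 : Real.log (2*lam*M) = Real.log (lam*P) + Real.log (2*M/P) := by
      rw [← Real.log_mul (ne_of_gt hlp) (by positivity)]
      congr 1
      field_simp
    nlinarith
  have hinle : (1/(2*π)) * (∫ θ in (-π)..π, Phi Sw lam η η0 θ)
      ≤ (1/2) * Real.log (2*lam*M) - η0 := by
    calc (1/(2*π)) * (∫ θ in (-π)..π, Phi Sw lam η η0 θ)
        ≤ (1/(2*π)) * (2*π*((1/2) * Real.log (2*lam*M) - η0)) := by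
          apply mul_le_mul_of_nonneg_left _ (by positivity)
          rw [← hmajval]; exact hmono
      _ = (1/2) * Real.log (2*lam*M) - η0 := by field_simp
  linarith

end Helpers

lemma Sw_facts (p q : Polynomial ℝ)
    (hq : ∀ z : ℂ, (q.map (algebraMap ℝ ℂ)).eval z = 0 → ‖z‖ < 1)
    (hp : ∀ z : ℂ, ‖z‖ = 1 → (p.map (algebraMap ℝ ℂ)).eval z ≠ 0)
    (Sw : ℝ → ℝ)
    (hSw : ∀ θ : ℝ, Sw θ =
      (‖(p.map (algebraMap ℝ ℂ)).eval (Complex.exp ((θ : ℂ) * Complex.I)) /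
        (q.map (algebraMap ℝ ℂ)).eval (Complex.exp ((θ : ℂ) * Complex.I))‖) ^ 2) :
    Continuous Sw ∧ ∀ θ, 0 < Sw θ := by
  have habs : ∀ θ : ℝ, ‖Complex.exp ((θ : ℂ) * Complex.I)‖ = 1 := fun θ =>
    Complex.norm_exp_ofReal_mul_I θ
  have hqne : ∀ θ : ℝ,
      (q.map (algebraMap ℝ ℂ)).eval (Complex.exp ((θ : ℂ) * Complex.I)) ≠ 0 := by
    intro θ hcon
    have := hq _ hcon
    rw [habs θ] at this
    exact lt_irrefl 1 this
  have hpne : ∀ θ : ℝ,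
      (p.map (algebraMap ℝ ℂ)).eval (Complex.exp ((θ : ℂ) * Complex.I)) ≠ 0 := fun θ =>
    hp _ (habs θ)
  have hexp : Continuous fun θ : ℝ => Complex.exp ((θ : ℂ) * Complex.I) :=
    Complex.continuous_exp.comp (Complex.continuous_ofReal.mul continuous_const)
  have hpe : Continuous fun θ : ℝ =>
      (p.map (algebraMap ℝ ℂ)).eval (Complex.exp ((θ : ℂ) * Complex.I)) :=
    (p.map (algebraMap ℝ ℂ)).continuous.comp hexp
  have hqe : Continuous fun θ : ℝ =>
      (q.map (algebraMap ℝ ℂ)).eval (Complex.exp ((θ : ℂ) * Complex.I)) :=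
    (q.map (algebraMap ℝ ℂ)).continuous.comp hexp
  have hSweq : Sw = fun θ : ℝ =>
      (‖(p.map (algebraMap ℝ ℂ)).eval (Complex.exp ((θ : ℂ) * Complex.I)) /
        (q.map (algebraMap ℝ ℂ)).eval (Complex.exp ((θ : ℂ) * Complex.I))‖) ^ 2 :=
    funext hSw
  constructor
  · rw [hSweq]
    exact ((continuous_norm.comp (hpe.div hqe hqne)).pow 2)
  · intro θ
    rw [hSw θ]
    have hne : (p.map (algebraMap ℝ ℂ)).eval (Complex.exp ((θ : ℂ) * Complex.I)) /
        (q.map (algebraMap ℝ ℂ)).eval (Complex.exp ((θ : ℂ) * Complex.I)) ≠ 0 :=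
      div_ne_zero (hpne θ) (hqne θ)
    have := norm_pos_iff.mpr hne
    positivity

/-- for fixed `h ≥ 1`, the discretized dual optimal values `μ_h(m)`
converge, as the grid is refined, to the continuous dual optimal value
`μ_h = −sup_{λ>0,η,η₀} g(λ,η,η₀)`. -/
theorem muDisc_tendsto_muh
    (p q : Polynomial ℝ)
    (hq : ∀ z : ℂ, (q.map (algebraMap ℝ ℂ)).eval z = 0 → ‖z‖ < 1)
    (hp : ∀ z : ℂ, ‖z‖ = 1 → (p.map (algebraMap ℝ ℂ)).eval z ≠ 0)
    (Sw : ℝ → ℝ)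
    (hSw : ∀ θ : ℝ, Sw θ =
      (‖(p.map (algebraMap ℝ ℂ)).eval (Complex.exp ((θ : ℂ) * Complex.I)) /
        (q.map (algebraMap ℝ ℂ)).eval (Complex.exp ((θ : ℂ) * Complex.I))‖) ^ 2)
    (hSwnc : ¬ ∃ cst : ℝ, ∀ θ ∈ Set.Icc (-π) π, Sw θ = cst)
    (P : ℝ) (hP : 0 < P)
    (h : ℕ) (hh : 1 ≤ h) :
    Tendsto (fun m : ℕ => muDisc Sw P h m) atTop
      (nhds (- sSup {y | ∃ (lam : ℝ) (η : Fin h → ℝ) (η0 : ℝ),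
        0 < lam ∧ y = gdual Sw P lam η η0})) := by
  obtain ⟨hSwc, hSwpos⟩ := Sw_facts p q hq hp Sw hSw
  clear hSw hq hp hSwnc hh
  have hπ := Real.pi_pos
  obtain ⟨θM, hθMmem, hθMmax⟩ := isCompact_Icc.exists_isMaxOn
    (Set.nonempty_Icc.2 (by linarith : -π ≤ π)) hSwc.continuousOn
  set M := Sw θM with hMdef
  have hM : ∀ θ ∈ Set.Icc (-π) π, Sw θ ≤ M := fun θ hθ => isMaxOn_iff.1 hθMmax θ hθ
  have hMpos : 0 < M := hSwpos θM
  set S := sSup {y | ∃ (lam : ℝ) (η : Fin h → ℝ) (η0 : ℝ),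
      0 < lam ∧ y = gdual Sw P lam η η0} with hSdef
  have hCub : ∀ y ∈ {y | ∃ (lam : ℝ) (η : Fin h → ℝ) (η0 : ℝ),
      0 < lam ∧ y = gdual Sw P lam η η0}, y ≤ (1/2) * Real.log (2*M/P) := by
    rintro y ⟨lam, η, η0, hl, rfl⟩
    exact gdual_le_Cstar Sw P hSwpos hSwc M hM hP lam η η0 hl
  have hCne : Set.Nonempty {y | ∃ (lam : ℝ) (η : Fin h → ℝ) (η0 : ℝ),
      0 < lam ∧ y = gdual Sw P lam η η0} := ⟨gdual Sw P 1 0 0, 1, 0, 0, one_pos, rfl⟩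
  have hCbdd : BddAbove {y | ∃ (lam : ℝ) (η : Fin h → ℝ) (η0 : ℝ),
      0 < lam ∧ y = gdual Sw P lam η η0} := ⟨_, hCub⟩
  have hgle : ∀ (lam : ℝ) (η : Fin h → ℝ) (η0 : ℝ), 0 < lam →
      gdual Sw P lam η η0 ≤ S := fun lam η η0 hl => le_csSup hCbdd ⟨lam, η, η0, hl, rfl⟩
  rw [Metric.tendsto_atTop]
  intro ε hε
  obtain ⟨y0, hy0C, hy0⟩ := exists_lt_of_lt_csSup hCne (show S - ε/4 < S by linarith)
  obtain ⟨l0, e0, b0, hl0, hy0eq⟩ := hy0C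
  -- constants for the compact box K
  set lam1 : ℝ := min l0 (Real.exp (2*S - 1) / (2*M)) with hlam1def
  have hlam1pos : 0 < lam1 := lt_min hl0 (by positivity)
  have hlam1l0 : lam1 ≤ l0 := min_le_left _ _
  have hlam1e : lam1 ≤ Real.exp (2*S - 1) / (2*M) := min_le_right _ _
  set lam2 : ℝ := max (max l0 (1/P)) (((1/2) * Real.log (2*M/P) + 1/2 - S) * (2/P)) with hlam2def
  have hlam2l0 : l0 ≤ lam2 := le_trans (le_max_left _ _) (le_max_left _ _)
  have hlam2pos : 0 < lam2 := lt_of_lt_of_le hl0 hlam2l0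
  have hlam12 : lam1 ≤ lam2 := le_trans (min_le_left _ _) hlam2l0
  have hlam2c : ((1/2) * Real.log (2*M/P) + 1/2 - S) * (2/P) ≤ lam2 := le_max_right _ _
  set R2 : ℝ := max 1 (4*lam2*M*((1/2) * Real.log (2*lam2*M) + 1/2 - S)) with hR2def
  have hR2pos : (0:ℝ) < R2 := lt_of_lt_of_le one_pos (le_max_left _ _)
  have hR2le : 4*lam2*M*((1/2) * Real.log (2*lam2*M) + 1/2 - S) ≤ R2 := le_max_right _ _
  set ρ : ℝ := max (Real.sqrt R2) (max (‖e0‖) |b0|) with hρdef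
  have hρ0 : 0 ≤ ρ := le_trans (Real.sqrt_nonneg _) (le_max_left _ _)
  have hρsq : R2 ≤ ρ^2 := by
    have h1 : Real.sqrt R2 ≤ ρ := le_max_left _ _
    nlinarith [Real.sq_sqrt hR2pos.le, Real.sqrt_nonneg R2]
  have hρe0 : ‖e0‖ ≤ ρ := le_trans (le_max_left _ _) (le_max_right _ _)
  have hρb0 : |b0| ≤ ρ := le_trans (le_max_right _ _) (le_max_right _ _)
  clear_value S M lam1 lam2 R2 ρ
  clear hSdef hMdef hlam1def hlam2def hR2def hρdef
  -- the complement bound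
  have hBle : ∀ (lam : ℝ) (η : Fin h → ℝ) (η0 : ℝ), 0 < lam →
      ¬(lam1 ≤ lam ∧ lam ≤ lam2 ∧ η ∈ Metric.closedBall (0 : Fin h → ℝ) ρ ∧
        η0 ∈ Set.Icc (-ρ) ρ) →
      (1/2) * Real.log (2*lam*M) - lam * P + 1/2
        - (η0^2 + ∑ k, (η k)^2) / (4*lam*M) ≤ S := by
    intro lam η η0 hl hnot
    have hQ0 : (0:ℝ) ≤ η0^2 + ∑ k, (η k)^2 := by positivity
    have hQdiv : (0:ℝ) ≤ (η0^2 + ∑ k, (η k)^2) / (4*lam*M) := by positivity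
    by_cases hc1 : lam < lam1
    · -- small λ
      have hlog : Real.log (2*lam*M) ≤ 2*S - 1 := by
        have h1 : 2*lam*M ≤ Real.exp (2*S - 1) := by
          have : lam ≤ Real.exp (2*S - 1) / (2*M) := le_of_lt (lt_of_lt_of_le hc1 hlam1e)
          rw [le_div_iff₀ (by positivity)] at this
          linarith
        calc Real.log (2*lam*M) ≤ Real.log (Real.exp (2*S - 1)) :=
              Real.log_le_log (by positivity) h1
          _ = 2*S - 1 := Real.log_exp _
      nlinarith [mul_pos hl hP]
    · push_neg at hc1
      by_cases hc2 : lam2 < lam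
      · -- large λ
        have hlP : 0 < lam * P := by positivity
        have h2 : Real.log (lam*P) ≤ lam*P - 1 := Real.log_le_sub_one_of_pos hlP
        have h3 : Real.log (2*lam*M) = Real.log (lam*P) + Real.log (2*M/P) := by
          rw [← Real.log_mul (ne_of_gt hlP) (by positivity)]
          congr 1
          field_simp
        have h4 : ((1/2) * Real.log (2*M/P) + 1/2 - S) ≤ lam2 * P / 2 := by
          have hmul := mul_le_mul_of_nonneg_right hlam2c (by positivity : (0:ℝ) ≤ P/2)
          have hAe : ((1/2) * Real.log (2*M/P) + 1/2 - S) * (2/P) * (P/2)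
              = (1/2) * Real.log (2*M/P) + 1/2 - S := by field_simp
          rw [hAe] at hmul
          calc (1/2) * Real.log (2*M/P) + 1/2 - S ≤ lam2 * (P/2) := hmul
            _ = lam2 * P / 2 := by ring
        have h5 : lam2 * P ≤ lam * P := mul_le_mul_of_nonneg_right hc2.le hP.le
        nlinarith
      · push_neg at hc2
        -- λ in range, so η or η0 big
        have hQR2 : R2 < η0^2 + ∑ k, (η k)^2 := by
          rcases not_and.1 hnot hc1 with hbad
          rcases not_and.1 hbad hc2 with hbad2
          by_cases hball : η ∈ Metric.closedBall (0 : Fin h → ℝ) ρ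
          · have hb0 : η0 ∉ Set.Icc (-ρ) ρ := by
              intro hcon; exact (not_and.1 hbad2 hball) hcon
            have : ρ < |η0| := by
              by_contra hle
              push_neg at hle
              exact hb0 ⟨neg_le_of_abs_le hle, le_of_abs_le hle⟩
            have h6 : R2 < η0^2 := by nlinarith [abs_nonneg η0, sq_abs η0]
            have h7 : (0:ℝ) ≤ ∑ k, (η k)^2 := by positivity
            linarith
          · have : ρ < ‖η‖ := by
              by_contra hle
              push_neg at hle
              exact hball (by simpa [Metric.mem_closedBall, dist_eq_norm] using hle)
            obtain ⟨k, hk⟩ : ∃ k, ρ < |η k| := by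
              by_contra hcon
              push_neg at hcon
              have : ‖η‖ ≤ ρ := by
                apply pi_norm_le_iff_of_nonneg hρ0 |>.2
                intro k
                rw [Real.norm_eq_abs]
                exact hcon k
              linarith
            have h6 : R2 < (η k)^2 := by nlinarith [abs_nonneg (η k), sq_abs (η k)]
            have h7 : (η k)^2 ≤ ∑ j, (η j)^2 :=
              Finset.single_le_sum (fun j _ => sq_nonneg (η j)) (Finset.mem_univ k)
            nlinarith [sq_nonneg η0]
        -- now bound
        have hlog2 : Real.log (2*lam*M) ≤ Real.log (2*lam2*M) :=
          Real.log_le_log (by positivity) (by nlinarith)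
        have hdiv2 : (η0^2 + ∑ k, (η k)^2) / (4*lam2*M)
            ≤ (η0^2 + ∑ k, (η k)^2) / (4*lam*M) := by
          apply div_le_div_of_nonneg_left hQ0 (by positivity) (by nlinarith)
        have hfin : (1/2) * Real.log (2*lam2*M) + 1/2 - S
            ≤ (η0^2 + ∑ k, (η k)^2) / (4*lam2*M) := by
          rw [le_div_iff₀ (by positivity)]
          nlinarith
        nlinarith [mul_pos hl hP]
  -- compact box K and uniform continuity
  set K : Set (ℝ × (Fin h → ℝ) × ℝ) :=
    Set.Icc lam1 lam2 ×ˢ (Metric.closedBall (0 : Fin h → ℝ) ρ ×ˢ Set.Icc (-ρ) ρ) with hKdef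
  have hKcomp : IsCompact K :=
    isCompact_Icc.prod ((isCompact_closedBall _ _).prod isCompact_Icc)
  have hKsub : (K ×ˢ Set.Icc (-π) π) ⊆
      {pθ : (ℝ × (Fin h → ℝ) × ℝ) × ℝ | 0 < pθ.1.1} := by
    rintro ⟨⟨lam, η, η0⟩, θ⟩ ⟨hK, _⟩
    exact lt_of_lt_of_le hlam1pos hK.1.1
  have hUC := (hKcomp.prod isCompact_Icc).uniformContinuousOn_of_continuous
    ((cont_joint Sw hSwc hSwpos).mono hKsub)
  rw [Metric.uniformContinuousOn_iff] at hUC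
  obtain ⟨δ, hδpos, hδ⟩ := hUC (ε/8) (by linarith)
  set N : ℕ := max (h+1) (max 1 (⌈π/δ⌉₊ + 1)) with hNdef
  refine ⟨N, fun m hm => ?_⟩
  have hm1 : 1 ≤ m := le_trans (le_trans (le_max_left _ _) (le_max_right _ _)) hm
  have hmR : (0:ℝ) < (m:ℝ) := by exact_mod_cast hm1
  have hmh : h < 2*m := by
    have : h + 1 ≤ m := le_trans (le_max_left _ _) hm
    omega
  have hmδ : π/(m:ℝ) < δ := by
    have h1 : (⌈π/δ⌉₊ + 1 : ℕ) ≤ m := le_trans (le_trans (le_max_right _ _) (le_max_right _ _)) hm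
    have h2 : π/δ < (m:ℝ) := by
      calc π/δ ≤ (⌈π/δ⌉₊ : ℝ) := Nat.le_ceil _
        _ < (⌈π/δ⌉₊ : ℝ) + 1 := by linarith
        _ ≤ (m:ℝ) := by exact_mod_cast h1
    rw [div_lt_iff₀ hmR]
    rw [div_lt_iff₀ hδpos] at h2
    linarith
  -- uniform Riemann estimate on K
  have hRie : ∀ (lam : ℝ) (η : Fin h → ℝ) (η0 : ℝ), (lam, η, η0) ∈ K →
      |(1/(2*(m:ℝ))) * ∑ i : Fin (2*m), Phi Sw lam η η0 (θd m i)
        - (1/(2*π)) * ∫ θ in (-π)..π, Phi Sw lam η η0 θ| ≤ ε/8 := by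
    intro lam η η0 hxK
    have hl : 0 < lam := lt_of_lt_of_le hlam1pos hxK.1.1
    apply riemann_est _ m hm1 (cont_Phi_fixed Sw hSwc hSwpos lam η η0 hl).continuousOn
      (ε/8) (by linarith)
    intro u v hu hv huv
    have hdist : dist (((lam, η, η0) : ℝ × (Fin h → ℝ) × ℝ), u)
        (((lam, η, η0) : ℝ × (Fin h → ℝ) × ℝ), v) < δ := by
      rw [Prod.dist_eq]
      have : dist ((lam, η, η0) : ℝ × (Fin h → ℝ) × ℝ) ((lam, η, η0) : ℝ × (Fin h → ℝ) × ℝ) = 0 :=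
        dist_self _
      rw [this]
      rw [Real.dist_eq]
      calc max 0 |u - v| = |u - v| := max_eq_right (abs_nonneg _)
        _ ≤ π/(m:ℝ) := huv
        _ < δ := hmδ
    have := hδ ((lam, η, η0), u) ⟨hxK, hu⟩ ((lam, η, η0), v) ⟨hxK, hv⟩ hdist
    rw [Real.dist_eq] at this
    exact le_of_lt this
  -- upper bound on all elements of the discrete feasible set
  have hub : ∀ y ∈ DdiscSet Sw P h m, y ≤ S + ε/4 := by
    rintro y ⟨lam, η, η0, ν, hl, hfeas, hz, rfl⟩
    by_cases hxK : ((lam, η, η0) : ℝ × (Fin h → ℝ) × ℝ) ∈ K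
    · have h1 := gdisc_le_Rsum Sw P hSwpos m lam η η0 ν hl hfeas hz
      have h2 := Rsum_eq_phi_sum Sw P hSwpos m hm1 lam η η0 hl
      have h3 := gdual_eq_phi_int Sw P hSwpos lam η η0 hl
      have h4 := (abs_le.1 (hRie lam η η0 hxK)).2
      have h5 := hgle lam η η0 hl
      linarith
    · have h1 := elem_le_B Sw P hSwpos M hM m hm1 hmh lam η η0 ν hl hfeas hz
      have h2 : ¬(lam1 ≤ lam ∧ lam ≤ lam2 ∧ η ∈ Metric.closedBall (0 : Fin h → ℝ) ρ ∧
          η0 ∈ Set.Icc (-ρ) ρ) := by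
        intro hcon
        exact hxK ⟨⟨hcon.1, hcon.2.1⟩, hcon.2.2.1, hcon.2.2.2⟩
      have h3 := hBle lam η η0 hl h2
      linarith
  have hDne : (DdiscSet Sw P h m).Nonempty :=
    ⟨_, Rsum_mem Sw P hSwpos m l0 e0 b0 hl0⟩
  have hDbdd : BddAbove (DdiscSet Sw P h m) := ⟨S + ε/4, fun y hy => hub y hy⟩
  have hup : sSup (DdiscSet Sw P h m) ≤ S + ε/4 := csSup_le hDne hub
  -- lower bound
  have hx0K : ((l0, e0, b0) : ℝ × (Fin h → ℝ) × ℝ) ∈ K := by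
    refine ⟨⟨hlam1l0, hlam2l0⟩, ?_, ?_, ?_⟩
    · rw [Metric.mem_closedBall, dist_eq_norm, sub_zero]
      exact hρe0
    · linarith [neg_abs_le b0]
    · linarith [le_abs_self b0]
  have hlow : S - ε/2 ≤ sSup (DdiscSet Sw P h m) := by
    have hmem := Rsum_mem Sw P hSwpos m l0 e0 b0 hl0
    have h2 := Rsum_eq_phi_sum Sw P hSwpos m hm1 l0 e0 b0 hl0
    have h3 := gdual_eq_phi_int Sw P hSwpos l0 e0 b0 hl0
    have h4 := (abs_le.1 (hRie l0 e0 b0 hx0K)).1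
    have h6 := le_csSup hDbdd hmem
    have h7 : S - ε/4 < gdual Sw P l0 e0 b0 := by rw [← hy0eq]; exact hy0
    linarith
  -- conclude
  have hgoal : muDisc Sw P h m = - sSup (DdiscSet Sw P h m) := rfl
  rw [Real.dist_eq, hgoal]
  have habs : |(- sSup (DdiscSet Sw P h m)) - (-S)| = |sSup (DdiscSet Sw P h m) - S| := by
    rw [abs_sub_comm]
    congr 1
    ring
  rw [habs]
  have : |sSup (DdiscSet Sw P h m) - S| ≤ ε/2 :=
    abs_le.2 ⟨by linarith, by linarith⟩
  linarith
end
end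

section
/- Let Q = n/d be a real rational function with deg n < deg d (strictly proper) whose poles all lie in the open unit disc (every complex root of d satisfies |z| < 1), and suppose 1 + Q(e^{iθ}) ≠ 0 for all θ ∈ [−π,π]. Then (1/(2π)) ∫_{−π}^{π} log|1 + Q(e^{iθ})| dθ = Σ log|z|, where the sum runs (with multiplicity) over the complex roots z of the polynomial d + n with |z| > 1. (These roots are exactly the unstable poles of the feedback controller K = Q(1+Q)^{−1}, so the achievable transmission rate of the coding scheme built from Q equals Σ_i log|λ_i(A_u)|.) -/
open Real

theorem meanvalue {f : ℂ → ℂ} (h : DiffContOnCl ℂ f (Metric.ball 0 1)) :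
    (∫ θ in (0:ℝ)..2*π, f (Complex.exp (θ * Complex.I))) = 2 * π * f 0 := by
  have h0 : (0:ℂ) ∈ Metric.ball (0:ℂ) 1 := by simp
  have h1 := h.circleIntegral_sub_inv_smul h0
  rw [circleIntegral] at h1
  simp only [deriv_circleMap, circleMap_zero, sub_zero, Complex.ofReal_one, one_mul, smul_eq_mul] at h1
  have key : (fun θ : ℝ => Complex.exp (θ * Complex.I) * Complex.I *
      ((Complex.exp (θ * Complex.I))⁻¹ * f (Complex.exp (θ * Complex.I))))
      = fun θ : ℝ => Complex.I * f (Complex.exp (θ * Complex.I)) := by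
    funext θ
    have hne : Complex.exp (θ * Complex.I) ≠ 0 := Complex.exp_ne_zero _
    field_simp
  rw [key, intervalIntegral.integral_const_mul] at h1
  have hI : (Complex.I : ℂ) ≠ 0 := Complex.I_ne_zero
  apply mul_left_cancel₀ hI
  rw [h1]; ring

theorem intervalIntegral_re {f : ℝ → ℂ} {a b : ℝ}
    (hf : IntervalIntegrable f MeasureTheory.volume a b) :
    (∫ θ in a..b, (f θ).re) = (∫ θ in a..b, f θ).re := by
  rw [intervalIntegral, intervalIntegral]
  have h1 := _root_.integral_re (𝕜 := ℂ) hf.1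
  have h2 := _root_.integral_re (𝕜 := ℂ) hf.2
  simp only [RCLike.re_eq_complex_re] at h1 h2
  rw [h1, h2, Complex.sub_re]

theorem circle_cont {c : ℂ} :
    Continuous fun θ : ℝ => 1 - c * Complex.exp (θ * Complex.I) := by
  continuity

theorem log_one_sub_integral {c : ℂ} (hc : ‖c‖ < 1) :
    (∫ θ in (0:ℝ)..2*π, Real.log (‖1 - c * Complex.exp (θ * Complex.I)‖)) = 0 := by
  set f : ℂ → ℂ := fun z => Complex.log (1 - c * z) with hf
  have hmem : ∀ z : ℂ, z ∈ Metric.closedBall (0:ℂ) 1 → (1 - c * z) ∈ Complex.slitPlane := by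
    intro z hz
    simp only [Metric.mem_closedBall, dist_zero_right] at hz
    have : ‖-(c * z)‖ < 1 := by
      rw [norm_neg, norm_mul]
      calc ‖c‖ * ‖z‖ ≤ ‖c‖ * 1 := mul_le_mul_of_nonneg_left hz (norm_nonneg _)
        _ = ‖c‖ := mul_one _
        _ < 1 := hc
    have := Complex.mem_slitPlane_of_norm_lt_one this
    simpa [sub_eq_add_neg] using this
  have hdiff : ∀ z : ℂ, z ∈ Metric.closedBall (0:ℂ) 1 → DifferentiableAt ℂ f z := by
    intro z hz
    exact (Complex.differentiableAt_log (hmem z hz)).comp z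
      ((differentiableAt_const (1:ℂ)).sub ((differentiableAt_const c).mul differentiableAt_id))
  have hdc : DiffContOnCl ℂ f (Metric.ball 0 1) := by
    constructor
    · intro z hz
      exact (hdiff z (Metric.ball_subset_closedBall hz)).differentiableWithinAt
    · rw [closure_ball (0:ℂ) one_ne_zero]
      intro z hz
      exact (hdiff z hz).continuousAt.continuousWithinAt
  have hmv := meanvalue hdc
  have hf0 : f 0 = 0 := by simp [hf]
  rw [hf0, mul_zero] at hmv
  have hexp_mem : ∀ θ : ℝ, Complex.exp (θ * Complex.I) ∈ Metric.closedBall (0:ℂ) 1 := by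
    intro θ
    simp [Metric.mem_closedBall, dist_zero_right, Complex.norm_exp_ofReal_mul_I]
  have hcont : Continuous fun θ : ℝ => f (Complex.exp (θ * Complex.I)) := by
    rw [continuous_iff_continuousAt]
    intro θ
    show ContinuousAt (Complex.log ∘ fun θ : ℝ => 1 - c * Complex.exp (θ * Complex.I)) θ
    exact ContinuousAt.comp (g := Complex.log)
      (f := fun θ : ℝ => 1 - c * Complex.exp (θ * Complex.I)) (x := θ)
      (_root_.continuousAt_clog (hmem _ (hexp_mem θ))) circle_cont.continuousAt
  have hint : IntervalIntegrable (fun θ : ℝ => f (Complex.exp (θ * Complex.I)))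
      MeasureTheory.volume 0 (2*π) := hcont.intervalIntegrable _ _
  have hre := intervalIntegral_re hint
  rw [hmv] at hre
  simp only [Complex.zero_re] at hre
  rw [← hre]
  congr 1
  funext θ
  exact (Complex.log_re _).symm

theorem exp_theta_I_mul (a : ℂ) (θ : ℝ) :
    Complex.exp (θ * Complex.I) - a
      = Complex.exp (θ * Complex.I) * (1 - a * Complex.exp (-(θ * Complex.I))) := by
  have he : Complex.exp (θ * Complex.I) * Complex.exp (-(θ * Complex.I)) = 1 := by
    rw [← Complex.exp_add]; simp
  linear_combination a * he

theorem abs_exp_sub_eq {a : ℂ} (θ : ℝ) :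
    ‖Complex.exp (θ * Complex.I) - a‖
      = ‖1 - (starRingEnd ℂ) a * Complex.exp (θ * Complex.I)‖ := by
  rw [exp_theta_I_mul a θ, norm_mul, Complex.norm_exp_ofReal_mul_I, one_mul]
  rw [← Complex.norm_conj]
  congr 1
  rw [map_sub, map_one, map_mul, ← Complex.exp_conj]
  congr 2
  simp [Complex.conj_ofReal]

theorem one_sub_ne {c : ℂ} (hc : ‖c‖ < 1) (θ : ℝ) :
    (1:ℂ) - c * Complex.exp (θ * Complex.I) ≠ 0 := by
  intro h0
  have h2 : c * Complex.exp (θ * Complex.I) = 1 := (sub_eq_zero.mp h0).symm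
  have h1 : ‖c * Complex.exp (θ * Complex.I)‖ = 1 := by rw [h2]; simp
  rw [norm_mul, Complex.norm_exp_ofReal_mul_I, mul_one] at h1
  linarith

theorem root_integral {a : ℂ} (ha : ‖a‖ ≠ 1) :
    (∫ θ in (0:ℝ)..2*π, Real.log (‖Complex.exp (θ * Complex.I) - a‖))
      = 2 * π * (if 1 < ‖a‖ then Real.log (‖a‖) else 0) := by
  rcases lt_or_gt_of_ne ha with h | h
  · rw [if_neg (by linarith)]
    have : ∀ θ : ℝ, Real.log (‖Complex.exp (θ * Complex.I) - a‖)
        = Real.log (‖1 - (starRingEnd ℂ) a * Complex.exp (θ * Complex.I)‖) := by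
      intro θ; rw [abs_exp_sub_eq]
    rw [intervalIntegral.integral_congr (fun θ _ => this θ)]
    rw [log_one_sub_integral (by rwa [Complex.norm_conj])]
    ring
  · rw [if_pos h]
    have ha0 : a ≠ 0 := by
      intro h0; rw [h0] at h; simp at h; linarith
    have hainv : ‖a⁻¹‖ < 1 := by
      rw [norm_inv, inv_lt_one_iff₀]; right; exact h
    have key : ∀ θ : ℝ, Real.log (‖Complex.exp (θ * Complex.I) - a‖)
        = Real.log (‖a‖)
          + Real.log (‖1 - a⁻¹ * Complex.exp (θ * Complex.I)‖) := by
      intro θ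
      have hfac : Complex.exp (θ * Complex.I) - a
          = (-a) * (1 - a⁻¹ * Complex.exp (θ * Complex.I)) := by
        field_simp; ring
      rw [hfac, norm_mul, norm_neg, Real.log_mul (norm_ne_zero_iff.mpr ha0)
        (norm_ne_zero_iff.mpr (one_sub_ne hainv θ))]
    rw [intervalIntegral.integral_congr (fun θ _ => key θ)]
    have hcont : Continuous fun θ : ℝ =>
        Real.log (‖1 - a⁻¹ * Complex.exp (θ * Complex.I)‖) := by
      apply Continuous.log (continuous_norm.comp circle_cont)
      intro θ
      exact norm_ne_zero_iff.mpr (one_sub_ne hainv θ)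
    rw [intervalIntegral.integral_add intervalIntegrable_const (hcont.intervalIntegrable _ _)]
    rw [log_one_sub_integral hainv]
    simp [mul_comm]

theorem root_cont {a : ℂ} (ha : ‖a‖ ≠ 1) :
    Continuous fun θ : ℝ => Real.log (‖Complex.exp (θ * Complex.I) - a‖) := by
  apply Continuous.log
  · exact continuous_norm.comp (by continuity)
  · intro θ
    apply norm_ne_zero_iff.mpr
    intro h0
    have h2 : Complex.exp (θ * Complex.I) = a := sub_eq_zero.mp h0
    have : ‖a‖ = 1 := by rw [← h2, Complex.norm_exp_ofReal_mul_I]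
    exact ha this

theorem multiset_cont (s : Multiset ℂ) (hs : ∀ z ∈ s, ‖z‖ ≠ 1) :
    Continuous fun θ : ℝ =>
      (s.map (fun z => Real.log (‖Complex.exp (θ * Complex.I) - z‖))).sum := by
  induction s using Multiset.induction_on with
  | empty => simpa using continuous_const
  | cons a s ih =>
    simp only [Multiset.map_cons, Multiset.sum_cons]
    exact (root_cont (hs a (Multiset.mem_cons_self a s))).add
      (ih fun z hz => hs z (Multiset.mem_cons_of_mem hz))

theorem multiset_integral (s : Multiset ℂ) (hs : ∀ z ∈ s, ‖z‖ ≠ 1) :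
    (∫ θ in (0:ℝ)..2*π,
        (s.map (fun z => Real.log (‖Complex.exp (θ * Complex.I) - z‖))).sum)
      = 2 * π * (s.map (fun z =>
          if 1 < ‖z‖ then Real.log (‖z‖) else 0)).sum := by
  induction s using Multiset.induction_on with
  | empty => simp
  | cons a s ih =>
    have ha := hs a (Multiset.mem_cons_self a s)
    have hs' : ∀ z ∈ s, ‖z‖ ≠ 1 := fun z hz => hs z (Multiset.mem_cons_of_mem hz)
    simp only [Multiset.map_cons, Multiset.sum_cons]
    rw [intervalIntegral.integral_add ((root_cont ha).intervalIntegrable _ _)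
      ((multiset_cont s hs').intervalIntegrable _ _), root_integral ha, ih hs']
    ring

theorem log_multiset_prod (s : Multiset ℝ) (h : ∀ x ∈ s, x ≠ 0) :
    Real.log s.prod = (s.map Real.log).sum := by
  induction s using Multiset.induction_on with
  | empty => simp
  | cons a s ih =>
    have ha := h a (Multiset.mem_cons_self a s)
    have hs' : ∀ x ∈ s, x ≠ 0 := fun x hx => h x (Multiset.mem_cons_of_mem hx)
    rw [Multiset.prod_cons, Multiset.map_cons, Multiset.sum_cons,
      Real.log_mul ha (Multiset.prod_ne_zero (fun h0 => hs' 0 h0 rfl)), ih hs']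

theorem poly_integral (p : Polynomial ℂ) (hp : p ≠ 0)
    (hroots : ∀ z ∈ p.roots, ‖z‖ ≠ 1) :
    (∫ θ in (0:ℝ)..2*π, Real.log (‖p.eval (Complex.exp (θ * Complex.I))‖))
      = 2 * π * (Real.log (‖p.leadingCoeff‖)
        + (p.roots.map (fun z =>
            if 1 < ‖z‖ then Real.log (‖z‖) else 0)).sum) := by
  have hsplit : p.Splits := IsAlgClosed.splits p
  have hfac := (Polynomial.C_leadingCoeff_mul_prod_multiset_X_sub_C (IsAlgClosed.card_roots_eq_natDegree (p := p))).symm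
  have key : ∀ θ : ℝ, Real.log (‖p.eval (Complex.exp (θ * Complex.I))‖)
      = Real.log (‖p.leadingCoeff‖)
        + (p.roots.map (fun z =>
            Real.log (‖Complex.exp (θ * Complex.I) - z‖))).sum := by
    intro θ
    set x := Complex.exp (θ * Complex.I) with hx
    have hev : p.eval x = p.leadingCoeff * (p.roots.map (fun z => x - z)).prod := by
      conv_lhs => rw [hfac]
      rw [Polynomial.eval_mul, Polynomial.eval_C, Polynomial.eval_multiset_prod]
      congr 2
      rw [Multiset.map_map]
      congr 1
      funext z
      simp
    rw [hev, norm_mul, Real.log_mul (norm_ne_zero_iff.mpr (Polynomial.leadingCoeff_ne_zero.mpr hp)) ?_]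
    · congr 1
      rw [(fun s => Multiset.induction_on s (by simp) (fun a s ih => by simp [norm_mul, ih]) : ∀ s : Multiset ℂ, ‖s.prod‖ = (s.map (fun x => ‖x‖)).prod), Multiset.map_map]
      rw [_root_.log_multiset_prod]
      · rw [Multiset.map_map]; rfl
      · intro y hy
        rw [Multiset.mem_map] at hy
        obtain ⟨z, hz, rfl⟩ := hy
        simp only [Function.comp_apply]
        apply norm_ne_zero_iff.mpr
        intro h0
        exact hroots z hz (by rw [← sub_eq_zero.mp h0, hx, Complex.norm_exp_ofReal_mul_I])
    · apply norm_ne_zero_iff.mpr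
      apply Multiset.prod_ne_zero
      intro h0
      rw [Multiset.mem_map] at h0
      obtain ⟨z, hz, hz0⟩ := h0
      exact hroots z hz (by rw [← sub_eq_zero.mp hz0, hx, Complex.norm_exp_ofReal_mul_I])
  rw [intervalIntegral.integral_congr (fun θ _ => key θ)]
  rw [intervalIntegral.integral_add intervalIntegrable_const
    ((multiset_cont p.roots hroots).intervalIntegrable _ _)]
  rw [multiset_integral p.roots hroots]
  rw [intervalIntegral.integral_const, smul_eq_mul]
  ring

theorem filter_ite_sum (s : Multiset ℂ) :
    ((s.filter (fun z => 1 < ‖z‖)).map (fun z => Real.log (‖z‖))).sum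
      = (s.map (fun z => if 1 < ‖z‖ then Real.log (‖z‖) else 0)).sum := by
  induction s using Multiset.induction_on with
  | empty => simp
  | cons a s ih =>
    by_cases h : 1 < ‖a‖
    · simp [Multiset.filter_cons, h, ih]
    · simp [Multiset.filter_cons, h, ih]

theorem exp_periodic_comp (g : ℂ → ℝ) : Function.Periodic
    (fun θ : ℝ => g (Complex.exp ((θ:ℂ) * Complex.I))) (2*π) := by
  intro θ
  have h : Complex.exp ((↑(θ + 2*π):ℂ) * Complex.I) = Complex.exp ((θ:ℂ) * Complex.I) := by
    push_cast
    rw [add_mul, Complex.exp_add, Complex.exp_two_pi_mul_I, mul_one]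
  simp only [h]

theorem shift_interval (f : ℝ → ℝ) (hper : Function.Periodic f (2*π)) :
    (∫ θ in (-π)..π, f θ) = ∫ θ in (0:ℝ)..2*π, f θ := by
  have h1 : (∫ θ in (-π)..(-π + 2*π), f θ) = ∫ θ in (0:ℝ)..(0 + 2*π), f θ :=
    hper.intervalIntegral_add_eq (-π) 0
  have h2 : -π + 2*π = π := by ring
  rw [h2] at h1
  rw [h1]
  norm_num


/-- for a strictly proper stable real rational `Q = n/d` with
`1 + Q(e^{iθ}) ≠ 0` on the unit circle,
`(1/(2π)) ∫ log|1 + Q(e^{iθ})| dθ = Σ log|z|`, the sum over the roots `z` of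
`d + n` with `|z| > 1` (counted with multiplicity) — i.e. over the unstable poles
of `K = Q(1+Q)⁻¹`. -/
theorem log_integral_eq_sum_unstable_roots
    (n d : Polynomial ℝ)
    (hdeg : n.degree < d.degree)
    (hdroots : ∀ z : ℂ, (d.map (algebraMap ℝ ℂ)).eval z = 0 → ‖z‖ < 1)
    (hnz : ∀ θ : ℝ,
      1 + (n.map (algebraMap ℝ ℂ)).eval (Complex.exp ((θ : ℂ) * Complex.I)) /
          (d.map (algebraMap ℝ ℂ)).eval (Complex.exp ((θ : ℂ) * Complex.I)) ≠ 0) :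
    (1 / (2 * π)) * (∫ θ in (-π)..π, Real.log ‖
        (1 + (n.map (algebraMap ℝ ℂ)).eval (Complex.exp ((θ : ℂ) * Complex.I)) /
             (d.map (algebraMap ℝ ℂ)).eval (Complex.exp ((θ : ℂ) * Complex.I)))‖)
      = (((((d + n).map (algebraMap ℝ ℂ)).roots.filter
            (fun z => 1 < ‖z‖)).map
          (fun z => Real.log ‖z‖)).sum) := by
  set N := n.map (algebraMap ℝ ℂ) with hN
  set D := d.map (algebraMap ℝ ℂ) with hD
  set P := (d + n).map (algebraMap ℝ ℂ) with hP
  have hPadd : P = D + N := by rw [hP, hD, hN, Polynomial.map_add]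
  have hd0 : d ≠ 0 := by
    intro h0
    rw [h0, Polynomial.degree_zero] at hdeg
    exact not_lt_bot hdeg
  have hD0 : D ≠ 0 := by
    rw [hD]; exact Polynomial.map_ne_zero hd0
  have hDeval : ∀ θ : ℝ, D.eval (Complex.exp ((θ:ℂ) * Complex.I)) ≠ 0 := by
    intro θ h0
    have := hdroots _ h0
    rw [Complex.norm_exp_ofReal_mul_I] at this
    linarith
  have hPeval : ∀ θ : ℝ, P.eval (Complex.exp ((θ:ℂ) * Complex.I)) ≠ 0 := by
    intro θ h0
    apply hnz θ
    rw [hPadd, Polynomial.eval_add] at h0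
    field_simp [hDeval θ]
    linear_combination h0
  have hP0 : P ≠ 0 := by
    intro h0
    exact hPeval 0 (by rw [h0]; simp)
  have hProots : ∀ z ∈ P.roots, ‖z‖ ≠ 1 := by
    intro z hz habs
    have hzr : P.eval z = 0 := Polynomial.isRoot_of_mem_roots hz
    have hzexp : Complex.exp ((Complex.arg z : ℂ) * Complex.I) = z := by
      have h := Complex.norm_mul_exp_arg_mul_I z
      rwa [habs, Complex.ofReal_one, one_mul] at h
    exact hPeval (Complex.arg z) (by rw [hzexp]; exact hzr)
  have hDroots : ∀ z ∈ D.roots, ‖z‖ ≠ 1 := by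
    intro z hz
    have := hdroots z (Polynomial.isRoot_of_mem_roots hz)
    linarith
  have hpt : ∀ θ : ℝ, Real.log (‖1 + N.eval (Complex.exp ((θ:ℂ) * Complex.I)) / D.eval (Complex.exp ((θ:ℂ) * Complex.I))‖)
      = Real.log (‖P.eval (Complex.exp ((θ:ℂ) * Complex.I))‖)
        - Real.log (‖D.eval (Complex.exp ((θ:ℂ) * Complex.I))‖) := by
    intro θ
    have h1 : 1 + N.eval (Complex.exp ((θ:ℂ) * Complex.I)) / D.eval (Complex.exp ((θ:ℂ) * Complex.I))
        = P.eval (Complex.exp ((θ:ℂ) * Complex.I)) / D.eval (Complex.exp ((θ:ℂ) * Complex.I)) := by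
      rw [hPadd, Polynomial.eval_add, add_div,
        div_self (hDeval θ)]
    rw [h1, norm_div, Real.log_div (norm_ne_zero_iff.mpr (hPeval θ)) (norm_ne_zero_iff.mpr (hDeval θ))]
  rw [intervalIntegral.integral_congr (fun θ _ => hpt θ)]
  have hcirc : Continuous fun θ : ℝ => Complex.exp ((θ:ℂ) * Complex.I) :=
    Complex.continuous_exp.comp (Complex.continuous_ofReal.mul continuous_const)
  have hcontP : Continuous fun θ : ℝ =>
      Real.log (‖P.eval (Complex.exp ((θ:ℂ) * Complex.I))‖) := by
    apply Continuous.log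
    · exact continuous_norm.comp (P.continuous.comp hcirc)
    · intro θ; exact norm_ne_zero_iff.mpr (hPeval θ)
  have hcontD : Continuous fun θ : ℝ =>
      Real.log (‖D.eval (Complex.exp ((θ:ℂ) * Complex.I))‖) := by
    apply Continuous.log
    · exact continuous_norm.comp (D.continuous.comp hcirc)
    · intro θ; exact norm_ne_zero_iff.mpr (hDeval θ)
  rw [intervalIntegral.integral_sub (hcontP.intervalIntegrable _ _) (hcontD.intervalIntegrable _ _)]
  rw [shift_interval _ (exp_periodic_comp (fun z => Real.log (‖P.eval z‖))),
    shift_interval _ (exp_periodic_comp (fun z => Real.log (‖D.eval z‖)))]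
  rw [poly_integral P hP0 hProots, poly_integral D hD0 hDroots]
  have hlc : P.leadingCoeff = D.leadingCoeff := by
    rw [hP, hD, Polynomial.leadingCoeff_map, Polynomial.leadingCoeff_map]
    congr 1
    rw [add_comm]
    exact Polynomial.leadingCoeff_add_of_degree_lt hdeg
  have hDsum : (D.roots.map (fun z =>
      if 1 < ‖z‖ then Real.log (‖z‖) else 0)).sum = 0 := by
    apply Multiset.sum_eq_zero
    intro x hx
    rw [Multiset.mem_map] at hx
    obtain ⟨z, hz, rfl⟩ := hx
    rw [if_neg]
    intro h1
    have := hdroots z (Polynomial.isRoot_of_mem_roots hz)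
    linarith
  rw [hlc, hDsum, filter_ite_sum]
  have hπ : π ≠ 0 := Real.pi_ne_zero
  rw [add_zero, mul_add, add_sub_cancel_left]
  rw [one_div, inv_mul_eq_div, mul_comm, mul_div_assoc,
    div_self (by positivity : (2:ℝ)*π ≠ 0), mul_one]
end
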